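/- arXiv:1404.1773 — 7 statements merged into one kernel-verified Lean document; each statement's English description precedes it below -/
import Mathlib

section
/- Fix t > 0, ε > 0, β, ρ ∈ ℝ, let δ = -|β| - |ρ|/t + √((|β| + |ρ|/t)² + 2ε/t), and let ν be a Borel measure on ℝ concentrated on (0,∞) with ∫ min(x,1) ν(dx) < ∞ and ∫_{x>1} e^{rx} ν(dx) < ∞ for all r < ε. Then for every u ∈ ℂ with |Re u| < δ, every A < 0 and every s ∈ [0, t], the integral ∫_{(0,∞)} |e^{u·f_u(A,s)·x} - 1| ν(dx) is finite; in particular ∫_{x>1} e^{Re(u·f_u(A,s))·x} ν(dx) < ∞. -/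
open MeasureTheory

/-- `u·f_u(A,s) = ((e^{A(t-s)} - 1)/A)(uβ + u²/2) + ρu` for complex `u`. -/
noncomputable def ufc (t β ρ : ℝ) (u : ℂ) (A s : ℝ) : ℂ :=
  (((Real.exp (A * (t - s)) - 1) / A : ℝ) : ℂ) * (u * (β : ℂ) + u ^ 2 / 2) + (ρ : ℂ) * u

lemma abs_cexp_sub_one_le (z : ℂ) :
    ‖Complex.exp z - 1‖ ≤ ‖z‖ * Real.exp ‖z‖ := by
  have key : ∀ x ∈ Set.Icc (0 : ℝ) 1,
      HasDerivWithinAt (fun s : ℝ => Complex.exp ((s : ℂ) * z))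
        (Complex.exp ((x : ℂ) * z) * z) (Set.Icc 0 1) x := by
    intro x _
    have h1 : HasDerivAt (fun s : ℝ => (s : ℂ) * z) z x := by
      simpa using (Complex.ofRealCLM.hasDerivAt (x := x)).mul_const z
    exact h1.cexp.hasDerivWithinAt
  have bound : ∀ x ∈ Set.Icc (0 : ℝ) 1,
      ‖Complex.exp ((x : ℂ) * z) * z‖ ≤ ‖z‖ * Real.exp ‖z‖ := by
    intro x hx
    rw [norm_mul, Complex.norm_exp]
    have hre : ((x : ℂ) * z).re = x * z.re := by simp [Complex.mul_re]
    have h1 : x * z.re ≤ ‖z‖ := by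
      have hz := Complex.re_le_norm z
      have hz0 := norm_nonneg z
      rcases le_or_gt z.re 0 with h | h
      · nlinarith [hx.1, hx.2]
      · nlinarith [hx.1, hx.2]
    have := Real.exp_le_exp.2 (hre ▸ h1)
    have hz0 := norm_nonneg z
    calc Real.exp (((x : ℂ) * z).re) * ‖z‖
        ≤ Real.exp ‖z‖ * ‖z‖ := by
          exact mul_le_mul_of_nonneg_right this hz0
      _ = ‖z‖ * Real.exp ‖z‖ := by ring
  have := (convex_Icc (0 : ℝ) 1).norm_image_sub_le_of_norm_hasDerivWithin_le
    key bound (Set.left_mem_Icc.2 zero_le_one) (Set.right_mem_Icc.2 zero_le_one)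
  simpa using this

set_option maxHeartbeats 1000000 in
theorem stmt_6 (t ε β ρ : ℝ) (ht : 0 < t) (hε : 0 < ε)
    (ν : Measure ℝ) (hν : ν (Set.Ioi (0 : ℝ))ᶜ = 0)
    (hmin : Integrable (fun x : ℝ => min x 1) ν)
    (hexp : ∀ r : ℝ, r < ε → IntegrableOn (fun x : ℝ => Real.exp (r * x)) {x | 1 < x} ν) :
    ∀ u : ℂ, |u.re| < -|β| - |ρ| / t + Real.sqrt ((|β| + |ρ| / t) ^ 2 + 2 * ε / t) →
      ∀ A : ℝ, A < 0 → ∀ s ∈ Set.Icc (0 : ℝ) t,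
        IntegrableOn (fun x : ℝ => ‖Complex.exp (ufc t β ρ u A s * (x : ℂ)) - 1‖)
          (Set.Ioi 0) ν ∧
        IntegrableOn (fun x : ℝ => Real.exp ((ufc t β ρ u A s).re * x)) {x | 1 < x} ν := by
  intro u hu A hA s hs
  set c := ufc t β ρ u A s with hcdef
  set a := (Real.exp (A * (t - s)) - 1) / A with hadef
  have hts : 0 ≤ t - s := by linarith [hs.2]
  have hexp1 : Real.exp (A * (t - s)) ≤ 1 := by
    rw [Real.exp_le_one_iff]
    exact mul_nonpos_of_nonpos_of_nonneg hA.le hts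
  have ha0 : 0 ≤ a := by
    rw [hadef, div_nonneg_iff]
    exact Or.inr ⟨by linarith, hA.le⟩
  have hat : a ≤ t := by
    have h1 : a ≤ t - s := by
      rw [hadef, div_le_iff_of_neg hA]
      have := Real.add_one_le_exp (A * (t - s))
      nlinarith
    linarith [hs.1]
  -- compute real part
  have hcre : c.re = a * (u.re * β + (u.re ^ 2 - u.im ^ 2) / 2) + ρ * u.re := by
    have hc2 : c = (a : ℂ) * (u * (β : ℂ) + u ^ 2 / 2) + (ρ : ℂ) * u := rfl
    have hsqre : (u ^ 2).re = u.re ^ 2 - u.im ^ 2 := by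
      rw [pow_two, Complex.mul_re]; ring
    rw [hc2, Complex.add_re, Complex.mul_re, Complex.mul_re, Complex.ofReal_re,
      Complex.ofReal_im, Complex.add_re, Complex.add_im, Complex.mul_re, Complex.mul_im,
      Complex.ofReal_re, Complex.ofReal_im, Complex.div_ofNat_re, hsqre]
    simp only [Complex.ofReal_re, Complex.ofReal_im]
    ring
  set r := |u.re| with hrdef
  have hr0 : 0 ≤ r := abs_nonneg _
  -- r bounds
  have hβr : u.re * β ≤ |β| * r := by
    calc u.re * β ≤ |u.re * β| := le_abs_self _
      _ = |β| * r := by rw [abs_mul]; ring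
  have hρr : ρ * u.re ≤ |ρ| * r := by
    calc ρ * u.re ≤ |ρ * u.re| := le_abs_self _
      _ = |ρ| * r := by rw [abs_mul]
  have hrsq : u.re ^ 2 = r ^ 2 := (sq_abs u.re).symm
  have him : 0 ≤ u.im ^ 2 := sq_nonneg _
  have hM0 : 0 ≤ |β| * r + r ^ 2 / 2 := by positivity
  have hup : c.re ≤ t * (|β| * r + r ^ 2 / 2) + |ρ| * r := by
    rw [hcre]
    have h1 : u.re * β + (u.re ^ 2 - u.im ^ 2) / 2 ≤ |β| * r + r ^ 2 / 2 := by
      rw [hrsq] at *; nlinarith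
    have h2 : a * (u.re * β + (u.re ^ 2 - u.im ^ 2) / 2) ≤ a * (|β| * r + r ^ 2 / 2) :=
      mul_le_mul_of_nonneg_left h1 ha0
    have h3 : a * (|β| * r + r ^ 2 / 2) ≤ t * (|β| * r + r ^ 2 / 2) :=
      mul_le_mul_of_nonneg_right hat hM0
    linarith
  -- key inequality : c.re < ε
  have hδsq : Real.sqrt ((|β| + |ρ| / t) ^ 2 + 2 * ε / t) ^ 2
      = (|β| + |ρ| / t) ^ 2 + 2 * ε / t := Real.sq_sqrt (by positivity)
  have hB0 : 0 ≤ |β| + |ρ| / t := by positivity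
  have hsq : (r + (|β| + |ρ| / t)) ^ 2 < (|β| + |ρ| / t) ^ 2 + 2 * ε / t := by
    have h1 : r + (|β| + |ρ| / t) < Real.sqrt ((|β| + |ρ| / t) ^ 2 + 2 * ε / t) := by
      rw [hrdef]; linarith [hu]
    nlinarith [Real.sqrt_nonneg ((|β| + |ρ| / t) ^ 2 + 2 * ε / t)]
  have hrt : |ρ| / t * t = |ρ| := div_mul_cancel₀ _ (ne_of_gt ht)
  have hεt : 2 * ε / t * t = 2 * ε := div_mul_cancel₀ _ (ne_of_gt ht)
  have hkey : t * (|β| * r + r ^ 2 / 2) + |ρ| * r < ε := by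
    have h1 : r ^ 2 + 2 * (|β| + |ρ| / t) * r < 2 * ε / t := by nlinarith [hsq]
    have h2 := mul_lt_mul_of_pos_right h1 ht
    rw [hεt] at h2
    have hL : (r ^ 2 + 2 * (|β| + |ρ| / t) * r) * t
        = t * r ^ 2 + 2 * t * (|β| * r) + 2 * (|ρ| * r) := by
      field_simp
      ring
    rw [hL] at h2
    linarith
  have hcε : c.re < ε := lt_of_le_of_lt hup hkey
  -- second conjunct
  have hI2 : IntegrableOn (fun x : ℝ => Real.exp (c.re * x)) {x | 1 < x} ν := hexp c.re hcε
  refine ⟨?_, hI2⟩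
  -- measurability
  have hcont : Continuous fun x : ℝ => ‖Complex.exp (c * (x : ℂ)) - 1‖ :=
    continuous_norm.comp
      (((Complex.continuous_exp.comp (continuous_const.mul Complex.continuous_ofReal)).sub
        continuous_const))
  -- finite mass above 1
  have hfin : ν (Set.Ioi (1 : ℝ)) < ⊤ := by
    have h1 : ν {x : ℝ | 1 ≤ min x 1} < ⊤ := by
      have := hmin.measure_ge_lt_top (ε := 1) one_pos
      simpa using this
    refine lt_of_le_of_lt (measure_mono ?_) h1
    intro x hx
    simp only [Set.mem_setOf_eq, le_min_iff]
    exact ⟨le_of_lt hx, le_refl 1⟩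
  -- integrable on (0,1]
  have hI01 : IntegrableOn (fun x : ℝ => ‖Complex.exp (c * (x : ℂ)) - 1‖)
      (Set.Ioc 0 1) ν := by
    have hg : Integrable (fun x : ℝ => (‖c‖ * Real.exp ‖c‖) * min x 1)
        (ν.restrict (Set.Ioc 0 1)) := (hmin.const_mul _).restrict
    refine Integrable.mono' hg (hcont.aestronglyMeasurable.restrict) ?_
    rw [ae_restrict_iff' measurableSet_Ioc]
    refine Filter.Eventually.of_forall fun x hx => ?_
    have hx0 : 0 < x := hx.1
    have hx1 : x ≤ 1 := hx.2
    have hmin1 : min x 1 = x := min_eq_left hx1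
    have habs : ‖c * (x : ℂ)‖ = ‖c‖ * x := by
      rw [norm_mul, Complex.norm_of_nonneg hx0.le]
    have h1 := abs_cexp_sub_one_le (c * (x : ℂ))
    rw [habs] at h1
    have hc0 := norm_nonneg c
    have h2 : Real.exp (‖c‖ * x) ≤ Real.exp ‖c‖ := by
      apply Real.exp_le_exp.2
      nlinarith
    have h3 : ‖c‖ * x * Real.exp (‖c‖ * x)
        ≤ ‖c‖ * Real.exp ‖c‖ * x := by
      have : ‖c‖ * x * Real.exp (‖c‖ * x)
          ≤ ‖c‖ * x * Real.exp ‖c‖ := by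
        apply mul_le_mul_of_nonneg_left h2; positivity
      nlinarith
    rw [Real.norm_eq_abs, abs_of_nonneg (norm_nonneg _), hmin1]
    linarith
  -- integrable on (1,∞)
  have hI1i : IntegrableOn (fun x : ℝ => ‖Complex.exp (c * (x : ℂ)) - 1‖)
      (Set.Ioi 1) ν := by
    have hconst : IntegrableOn (fun _ : ℝ => (1 : ℝ)) (Set.Ioi 1) ν :=
      integrableOn_const hfin.ne
    have hI2' : IntegrableOn (fun x : ℝ => Real.exp (c.re * x)) (Set.Ioi 1) ν := hI2
    have hg : Integrable (fun x : ℝ => Real.exp (c.re * x) + 1) (ν.restrict (Set.Ioi 1)) :=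
      hI2'.add hconst
    refine Integrable.mono' hg (hcont.aestronglyMeasurable.restrict) ?_
    refine Filter.Eventually.of_forall fun x => ?_
    rw [Real.norm_eq_abs, abs_of_nonneg (norm_nonneg _)]
    have h1 : ‖Complex.exp (c * (x : ℂ)) - 1‖
        ≤ ‖Complex.exp (c * (x : ℂ))‖ + ‖(1 : ℂ)‖ := by
      simpa using norm_sub_le (Complex.exp (c * (x : ℂ))) 1
    have h2 : ‖Complex.exp (c * (x : ℂ))‖ = Real.exp (c.re * x) := by
      rw [Complex.norm_exp]
      congr 1
      simp [Complex.mul_re]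
    simp only [norm_one] at h1
    rw [h2] at h1
    exact h1
  have hsub : Set.Ioi (0 : ℝ) ⊆ Set.Ioc 0 1 ∪ Set.Ioi 1 := by
    intro x hx
    rcases le_or_gt x 1 with h | h
    · exact Or.inl ⟨hx, h⟩
    · exact Or.inr h
  exact (hI01.union hI1i).mono_set hsub
end

section
/- Fix t > 0, ε > 0, β, ρ ∈ ℝ, let δ = -|β| - |ρ|/t + √((|β| + |ρ|/t)² + 2ε/t), let γ₀ ≥ 0, and let ν be a Borel measure on ℝ concentrated on (0,∞) with ∫ min(x,1) ν(dx) < ∞ and ∫_{x>1} e^{rx} ν(dx) < ∞ for all r < ε. Then for every fixed A < 0, the function u ↦ ∫₀ᵗ θ_L(u·f_u(A,s)) ds is complex differentiable (analytic) on the open strip S = {u ∈ ℂ : |Re u| < δ}. -/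
open MeasureTheory

lemma my_norm_exp_sub_one_le (w : ℂ) : ‖Complex.exp w - 1‖ ≤ ‖w‖ * Real.exp ‖w‖ := by
  have hf : ∀ x ∈ Metric.closedBall (0:ℂ) ‖w‖,
      HasDerivWithinAt Complex.exp (Complex.exp x) (Metric.closedBall (0:ℂ) ‖w‖) x :=
    fun x _ => (Complex.hasDerivAt_exp x).hasDerivWithinAt
  have hb : ∀ x ∈ Metric.closedBall (0:ℂ) ‖w‖, ‖Complex.exp x‖ ≤ Real.exp ‖w‖ := by
    intro x hx
    rw [Complex.norm_exp]
    refine Real.exp_le_exp.2 ((Complex.re_le_norm x).trans ?_)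
    have h2 := Metric.mem_closedBall.1 hx
    rwa [dist_zero_right] at h2
  have h := Convex.norm_image_sub_le_of_norm_hasDerivWithin_le hf hb
    (convex_closedBall _ _) (Metric.mem_closedBall_self (norm_nonneg w))
    (Metric.mem_closedBall.2 (by rw [dist_zero_right]))
  simpa [Complex.exp_zero, mul_comm] using h

lemma phi_lt (t ε β ρ a : ℝ) (ht : 0 < t) (hε : 0 < ε) (ha : 0 ≤ a)
    (hlt : a < -|β| - |ρ| / t + Real.sqrt ((|β| + |ρ| / t) ^ 2 + 2 * ε / t)) :
    t * (|β| * a + a ^ 2 / 2) + |ρ| * a < ε := by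
  set b := |β| + |ρ| / t with hb_def
  have hb : 0 ≤ b := by positivity
  have hX : (0:ℝ) ≤ b ^ 2 + 2 * ε / t := by positivity
  have hs : Real.sqrt (b ^ 2 + 2 * ε / t) ^ 2 = b ^ 2 + 2 * ε / t := Real.sq_sqrt hX
  have h1 : a + b < Real.sqrt (b ^ 2 + 2 * ε / t) := by
    rw [hb_def]; linarith [hlt]
  have h2 : (a + b) ^ 2 < b ^ 2 + 2 * ε / t := by
    calc (a + b) ^ 2 < Real.sqrt (b ^ 2 + 2 * ε / t) ^ 2 :=
          pow_lt_pow_left₀ h1 (by linarith) two_ne_zero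
      _ = _ := hs
  have hbt : b * t = |β| * t + |ρ| := by rw [hb_def, add_mul, div_mul_cancel₀ _ ht.ne']
  have h3 : (a ^ 2 + 2 * a * b) * t < 2 * ε := by
    have h4 : a ^ 2 + 2 * a * b < 2 * ε / t := by nlinarith
    calc (a ^ 2 + 2 * a * b) * t < (2 * ε / t) * t := mul_lt_mul_of_pos_right h4 ht
      _ = 2 * ε := by field_simp
  nlinarith [h3, hbt]

/-- `θ_L(z) = γ₀ z + ∫_{(0,∞)} (e^{zx} - 1) ν(dx)`. -/
noncomputable def thetaL (γ₀ : ℝ) (ν : Measure ℝ) (z : ℂ) : ℂ :=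
  (γ₀ : ℂ) * z + ∫ x in Set.Ioi (0 : ℝ), (Complex.exp (z * (x : ℂ)) - 1) ∂ν

lemma ufc_re (t β ρ : ℝ) (u : ℂ) (A s : ℝ) :
    (ufc t β ρ u A s).re
      = ((Real.exp (A * (t - s)) - 1) / A) * (u.re * β + (u.re ^ 2 - u.im ^ 2) / 2) + ρ * u.re := by
  have h2 : u ^ 2 / 2 = ((1/2 : ℝ):ℂ) * (u * u) := by push_cast; ring
  simp only [ufc, h2, Complex.add_re, Complex.mul_re, Complex.ofReal_re, Complex.ofReal_im,
    Complex.add_im, Complex.mul_im]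
  ring

set_option maxHeartbeats 2000000 in
theorem stmt_7 (t ε β ρ γ₀ : ℝ) (ht : 0 < t) (hε : 0 < ε) (hγ₀ : 0 ≤ γ₀)
    (ν : Measure ℝ) (hν : ν (Set.Ioi (0 : ℝ))ᶜ = 0)
    (hmin : Integrable (fun x : ℝ => min x 1) ν)
    (hexp : ∀ r : ℝ, r < ε → IntegrableOn (fun x : ℝ => Real.exp (r * x)) {x | 1 < x} ν) :
    ∀ A : ℝ, A < 0 →
      DifferentiableOn ℂ
        (fun u : ℂ => ∫ s in (0 : ℝ)..t, thetaL γ₀ ν (ufc t β ρ u A s))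
        {u : ℂ | |u.re| < -|β| - |ρ| / t + Real.sqrt ((|β| + |ρ| / t) ^ 2 + 2 * ε / t)} := by
  intro A hA u₀ hu₀
  simp only [Set.mem_setOf_eq] at hu₀
  set δ : ℝ := -|β| - |ρ| / t + Real.sqrt ((|β| + |ρ| / t) ^ 2 + 2 * ε / t) with hδ_def
  clear_value δ
  refine DifferentiableAt.differentiableWithinAt (𝕜 := ℂ) ?_
  set μ : Measure ℝ := ν.restrict (Set.Ioi (0:ℝ)) with hμ_def
  -- constants
  set R : ℝ := (δ - |u₀.re|) / 2 with hR_def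
  clear_value R
  have hR : 0 < R := by rw [hR_def]; exact half_pos (sub_pos.2 hu₀)
  set a₁ : ℝ := |u₀.re| + R with ha₁_def
  clear_value a₁
  have ha₁0 : 0 ≤ a₁ := by rw [ha₁_def]; positivity
  have ha₁δ : a₁ < δ := by
    rw [ha₁_def, hR_def]; linarith [hu₀]
  set r : ℝ := t * (|β| * a₁ + a₁ ^ 2 / 2) + |ρ| * a₁ with hr_def
  clear_value r
  have hr0 : 0 ≤ r := by rw [hr_def]; positivity
  have hrε : r < ε := by
    rw [hr_def]
    exact phi_lt t ε β ρ a₁ ht hε ha₁0 (by rw [← hδ_def]; exact ha₁δ)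
  set r' : ℝ := (r + ε) / 2 with hr'_def
  clear_value r'
  have hrr' : r < r' := by rw [hr'_def]; linarith
  have hr'ε : r' < ε := by rw [hr'_def]; linarith
  have hr'0 : 0 ≤ r' := le_of_lt (lt_of_le_of_lt hr0 hrr')
  set M : ℝ := ‖u₀‖ + R with hM_def
  clear_value M
  have hM0 : 0 ≤ M := by
    rw [hM_def]
    have := norm_nonneg u₀
    linarith
  set Z : ℝ := t * (M * |β| + M ^ 2 / 2) + |ρ| * M with hZ_def
  clear_value Z
  have hZ0 : 0 ≤ Z := by rw [hZ_def]; positivity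
  set C₂ : ℝ := t * (|β| + M) + |ρ| with hC₂_def
  clear_value C₂
  have hC₂0 : 0 ≤ C₂ := by rw [hC₂_def]; positivity
  set K₁ : ℝ := max (Z * Real.exp Z) 1 with hK₁_def
  clear_value K₁
  have hK₁1 : (1:ℝ) ≤ K₁ := by rw [hK₁_def]; exact le_max_right _ _
  have hK₁Z : Z * Real.exp Z ≤ K₁ := by rw [hK₁_def]; exact le_max_left _ _
  set K₂ : ℝ := C₂ * max (Real.exp r) (1 / (r' - r)) with hK₂_def
  clear_value K₂
  -- the time-dependent coefficient
  set c : ℝ → ℝ := fun s => (Real.exp (A * (t - s)) - 1) / A with hc_def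
  clear_value c
  have hc_cont : Continuous c := by
    rw [hc_def]
    apply Continuous.div_const
    exact (Real.continuous_exp.comp (continuous_const.mul (continuous_const.sub continuous_id))).sub
      continuous_const
  have hc_mem : ∀ s ∈ Set.Icc (0:ℝ) t, 0 ≤ c s ∧ c s ≤ t := by
    intro s hs
    rw [hc_def]
    simp only
    have hts : 0 ≤ t - s := by linarith [hs.2]
    have hy : A * (t - s) ≤ 0 := mul_nonpos_of_nonpos_of_nonneg hA.le hts
    constructor
    · rw [div_nonneg_iff]
      right
      constructor
      · linarith [Real.exp_le_one_iff.2 hy]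
      · exact hA.le
    · rw [div_le_iff_of_neg hA]
      have h1 : A * (t - s) + 1 ≤ Real.exp (A * (t - s)) := by
        simpa [add_comm] using Real.add_one_le_exp (A * (t - s))
      have h2 : A * t ≤ A * (t - s) := by nlinarith [hs.1, hA]
      linarith
  -- the u-derivative of ufc
  set dufc : ℂ → ℝ → ℂ := fun u s => ((c s : ℝ) : ℂ) * ((β:ℂ) + u) + (ρ:ℂ) with hdufc_def
  clear_value dufc
  have hufc_deriv : ∀ (s : ℝ) (u : ℂ),
      HasDerivAt (fun u => ufc t β ρ u A s) (dufc u s) u := by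
    intro s u
    have ha : HasDerivAt (fun u : ℂ => u * (β:ℂ)) (β:ℂ) u := by
      simpa using (hasDerivAt_id u).mul_const (β:ℂ)
    have hb : HasDerivAt (fun u : ℂ => u ^ 2 / 2) u u := by
      have h := (hasDerivAt_pow 2 u).div_const 2
      norm_num at h
      convert h using 1
    have h1 : HasDerivAt (fun u : ℂ => u * (β:ℂ) + u ^ 2 / 2) ((β:ℂ) + u) u := ha.add hb
    have h2 : HasDerivAt (fun u : ℂ => ((c s : ℝ):ℂ) * (u * (β:ℂ) + u ^ 2 / 2))
        (((c s : ℝ):ℂ) * ((β:ℂ) + u)) u := h1.const_mul _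
    have h3 : HasDerivAt (fun u : ℂ => (ρ:ℂ) * u) (ρ:ℂ) u := by
      simpa using (hasDerivAt_id u).const_mul (ρ:ℂ)
    have h4 := h2.add h3
    rw [hdufc_def, hc_def]
    simp only
    show HasDerivAt (fun u : ℂ =>
      (((Real.exp (A * (t - s)) - 1) / A : ℝ) : ℂ) * (u * (β:ℂ) + u ^ 2 / 2) + (ρ:ℂ) * u) _ u
    subst hc_def; exact h4
  -- the dominating function
  set Dfun : ℝ → ℝ := fun x =>
    min x 1 + Set.indicator (Set.Ioi 1) (fun x => Real.exp (r' * x)) x with hDfun_def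
  clear_value Dfun
  have hD0 : ∀ x ∈ Set.Ioi (0:ℝ), 0 ≤ Dfun x := by
    intro x hx
    rw [hDfun_def]
    exact add_nonneg (le_min (le_of_lt hx) zero_le_one)
      (Set.indicator_nonneg (fun y _ => (Real.exp_pos _).le) x)
  have hD_int : Integrable Dfun μ := by
    have h1 : Integrable (fun x : ℝ => min x 1) μ := hmin.restrict
    have h2 : IntegrableOn (fun x : ℝ => Real.exp (r' * x)) (Set.Ioi 1) ν := hexp r' hr'ε
    have h3 : Integrable (Set.indicator (Set.Ioi 1) fun x => Real.exp (r' * x)) μ := by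
      rw [integrable_indicator_iff measurableSet_Ioi]
      rw [IntegrableOn, hμ_def, Measure.restrict_restrict measurableSet_Ioi,
        Set.inter_eq_self_of_subset_left (Set.Ioi_subset_Ioi zero_le_one)]
      exact h2
    rw [hDfun_def]
    exact h1.add h3
  -- master bounds for u in the closed ball, s in [0,t]
  have hu_re : ∀ u ∈ Metric.closedBall u₀ R, |u.re| ≤ a₁ := by
    intro u hu
    have h1 : |(u - u₀).re| ≤ ‖u - u₀‖ := by
      simpa using Complex.abs_re_le_norm (u - u₀)
    have h2 : ‖u - u₀‖ ≤ R := by simpa [dist_eq_norm] using Metric.mem_closedBall.1 hu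
    have h3 : |u.re| ≤ |u₀.re| + |(u - u₀).re| := by
      have h4 : u.re = u₀.re + (u - u₀).re := by simp [Complex.sub_re]
      rw [h4]; exact abs_add_le _ _
    rw [ha₁_def]; linarith
  have hu_norm : ∀ u ∈ Metric.closedBall u₀ R, ‖u‖ ≤ M := by
    intro u hu
    have h2 : ‖u - u₀‖ ≤ R := by simpa [dist_eq_norm] using Metric.mem_closedBall.1 hu
    calc ‖u‖ = ‖u₀ + (u - u₀)‖ := by ring_nf
      _ ≤ ‖u₀‖ + ‖u - u₀‖ := norm_add_le _ _
      _ ≤ M := by rw [hM_def]; linarith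
  have hz_re : ∀ u ∈ Metric.closedBall u₀ R, ∀ s ∈ Set.Icc (0:ℝ) t,
      (ufc t β ρ u A s).re ≤ r := by
    intro u hu s hs
    have habs := hu_re u hu
    have hcs := hc_mem s hs
    rw [ufc_re]
    have h1 : u.re * β ≤ |β| * a₁ := by
      calc u.re * β ≤ |u.re * β| := le_abs_self _
        _ = |u.re| * |β| := abs_mul _ _
        _ ≤ a₁ * |β| := mul_le_mul_of_nonneg_right habs (abs_nonneg β)
        _ = |β| * a₁ := mul_comm _ _
    have h2 : u.re ^ 2 ≤ a₁ ^ 2 := by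
      rw [← sq_abs]; exact pow_le_pow_left₀ (abs_nonneg _) habs 2
    have hw : u.re * β + (u.re ^ 2 - u.im ^ 2) / 2 ≤ |β| * a₁ + a₁ ^ 2 / 2 := by
      linarith [sq_nonneg u.im, h1, h2]
    have hW0 : (0:ℝ) ≤ |β| * a₁ + a₁ ^ 2 / 2 := by positivity
    have h3 : c s * (u.re * β + (u.re ^ 2 - u.im ^ 2) / 2) ≤ t * (|β| * a₁ + a₁ ^ 2 / 2) := by
      calc c s * (u.re * β + (u.re ^ 2 - u.im ^ 2) / 2)
          ≤ c s * (|β| * a₁ + a₁ ^ 2 / 2) := mul_le_mul_of_nonneg_left hw hcs.1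
        _ ≤ t * (|β| * a₁ + a₁ ^ 2 / 2) := mul_le_mul_of_nonneg_right hcs.2 hW0
    have h4 : ρ * u.re ≤ |ρ| * a₁ := by
      calc ρ * u.re ≤ |ρ * u.re| := le_abs_self _
        _ = |ρ| * |u.re| := abs_mul _ _
        _ ≤ |ρ| * a₁ := mul_le_mul_of_nonneg_left habs (abs_nonneg ρ)
    have hceq : (Real.exp (A * (t - s)) - 1) / A = c s := by rw [hc_def]
    rw [hceq, hr_def]
    linarith
  have hz_norm : ∀ u ∈ Metric.closedBall u₀ R, ∀ s ∈ Set.Icc (0:ℝ) t,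
      ‖ufc t β ρ u A s‖ ≤ Z := by
    intro u hu s hs
    have hun := hu_norm u hu
    have hcs := hc_mem s hs
    have hceq : ((Real.exp (A * (t - s)) - 1) / A : ℝ) = c s := by rw [hc_def]
    have h1 : ‖u * (β:ℂ) + u ^ 2 / 2‖ ≤ M * |β| + M ^ 2 / 2 := by
      calc ‖u * (β:ℂ) + u ^ 2 / 2‖ ≤ ‖u * (β:ℂ)‖ + ‖u ^ 2 / 2‖ := norm_add_le _ _
        _ = ‖u‖ * |β| + ‖u‖ ^ 2 / 2 := by
            simp [norm_mul, Complex.norm_real, norm_pow, norm_div]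
        _ ≤ M * |β| + M ^ 2 / 2 := by
            have := pow_le_pow_left₀ (norm_nonneg u) hun 2
            have h2 := mul_le_mul_of_nonneg_right hun (abs_nonneg β)
            linarith
    have hW0 : (0:ℝ) ≤ M * |β| + M ^ 2 / 2 := by positivity
    calc ‖ufc t β ρ u A s‖
        ≤ ‖(((Real.exp (A * (t - s)) - 1) / A : ℝ) : ℂ) * (u * (β:ℂ) + u ^ 2 / 2)‖
          + ‖(ρ:ℂ) * u‖ := norm_add_le _ _
      _ = c s * ‖u * (β:ℂ) + u ^ 2 / 2‖ + |ρ| * ‖u‖ := by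
          rw [norm_mul, norm_mul, Complex.norm_real, Complex.norm_real,
            Real.norm_eq_abs, Real.norm_eq_abs, hceq, abs_of_nonneg hcs.1]
      _ ≤ t * (M * |β| + M ^ 2 / 2) + |ρ| * M := by
          have h3 : c s * ‖u * (β:ℂ) + u ^ 2 / 2‖ ≤ t * (M * |β| + M ^ 2 / 2) := by
            calc c s * ‖u * (β:ℂ) + u ^ 2 / 2‖ ≤ c s * (M * |β| + M ^ 2 / 2) :=
                  mul_le_mul_of_nonneg_left h1 hcs.1
              _ ≤ t * (M * |β| + M ^ 2 / 2) := mul_le_mul_of_nonneg_right hcs.2 hW0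
          have h4 : |ρ| * ‖u‖ ≤ |ρ| * M := mul_le_mul_of_nonneg_left hun (abs_nonneg ρ)
          linarith
      _ = Z := by rw [hZ_def]
  have hd_bound : ∀ u ∈ Metric.closedBall u₀ R, ∀ s ∈ Set.Icc (0:ℝ) t, ‖dufc u s‖ ≤ C₂ := by
    intro u hu s hs
    have hun := hu_norm u hu
    have hcs := hc_mem s hs
    rw [hdufc_def]
    simp only
    calc ‖((c s : ℝ):ℂ) * ((β:ℂ) + u) + (ρ:ℂ)‖
        ≤ ‖((c s : ℝ):ℂ) * ((β:ℂ) + u)‖ + ‖(ρ:ℂ)‖ := norm_add_le _ _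
      _ = c s * ‖(β:ℂ) + u‖ + |ρ| := by
          rw [norm_mul, Complex.norm_real, Complex.norm_real, Real.norm_eq_abs,
            Real.norm_eq_abs, abs_of_nonneg hcs.1]
      _ ≤ t * (|β| + M) + |ρ| := by
          have h1 : ‖(β:ℂ) + u‖ ≤ |β| + M := by
            calc ‖(β:ℂ) + u‖ ≤ ‖(β:ℂ)‖ + ‖u‖ := norm_add_le _ _
              _ ≤ |β| + M := by rw [Complex.norm_real, Real.norm_eq_abs]; linarith
          have h2 : c s * ‖(β:ℂ) + u‖ ≤ t * (|β| + M) := by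
            calc c s * ‖(β:ℂ) + u‖ ≤ c s * (|β| + M) :=
                  mul_le_mul_of_nonneg_left h1 hcs.1
              _ ≤ t * (|β| + M) := mul_le_mul_of_nonneg_right hcs.2 (by positivity)
          linarith
      _ = C₂ := by rw [hC₂_def]
  -- pointwise estimates on the integrand and its derivative
  have hre_mul : ∀ (z : ℂ) (x : ℝ), (z * (x:ℂ)).re = z.re * x := by
    intro z x; simp [Complex.mul_re]
  have hF_est : ∀ (z : ℂ), z.re ≤ r → ‖z‖ ≤ Z → ∀ x ∈ Set.Ioi (0:ℝ),
      ‖Complex.exp (z * (x:ℂ)) - 1‖ ≤ K₁ * Dfun x := by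
    intro z hzr hzZ x hx
    have hx0 : (0:ℝ) < x := hx
    by_cases hx1 : x ≤ 1
    · have hiz : Set.indicator (Set.Ioi 1) (fun x => Real.exp (r' * x)) x = 0 :=
        Set.indicator_of_notMem (by simpa using not_lt.2 hx1) _
      have hDx : Dfun x = x := by
        rw [hDfun_def]
        simp only
        rw [hiz, min_eq_left hx1, add_zero]
      have hnzx : ‖z * (x:ℂ)‖ = ‖z‖ * x := by
        rw [norm_mul, Complex.norm_real, Real.norm_eq_abs, abs_of_pos hx0]
      have h1 : ‖z * (x:ℂ)‖ ≤ Z := by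
        rw [hnzx]
        calc ‖z‖ * x ≤ Z * 1 := mul_le_mul hzZ hx1 hx0.le hZ0
          _ = Z := mul_one Z
      calc ‖Complex.exp (z * (x:ℂ)) - 1‖ ≤ ‖z * (x:ℂ)‖ * Real.exp ‖z * (x:ℂ)‖ :=
            my_norm_exp_sub_one_le _
        _ ≤ (Z * x) * Real.exp Z := by
            apply mul_le_mul
            · rw [hnzx]; exact mul_le_mul_of_nonneg_right hzZ hx0.le
            · exact Real.exp_le_exp.2 h1
            · exact (Real.exp_pos _).le
            · positivity
        _ = (Z * Real.exp Z) * x := by ring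
        _ ≤ K₁ * x := mul_le_mul_of_nonneg_right hK₁Z hx0.le
        _ = K₁ * Dfun x := by rw [hDx]
    · push_neg at hx1
      have hiz : Set.indicator (Set.Ioi 1) (fun x => Real.exp (r' * x)) x = Real.exp (r' * x) :=
        Set.indicator_of_mem hx1 _
      have hDx : Dfun x = 1 + Real.exp (r' * x) := by
        rw [hDfun_def]
        simp only
        rw [hiz, min_eq_right hx1.le]
      have h1 : ‖Complex.exp (z * (x:ℂ)) - 1‖ ≤ Real.exp (r' * x) + 1 := by
        calc ‖Complex.exp (z * (x:ℂ)) - 1‖ ≤ ‖Complex.exp (z * (x:ℂ))‖ + ‖(1:ℂ)‖ :=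
              norm_sub_le _ _
          _ = Real.exp (z.re * x) + 1 := by
              rw [Complex.norm_exp, hre_mul, norm_one]
          _ ≤ Real.exp (r' * x) + 1 := by
              have := Real.exp_le_exp.2
                (mul_le_mul_of_nonneg_right (hzr.trans hrr'.le) hx0.le)
              linarith
      calc ‖Complex.exp (z * (x:ℂ)) - 1‖ ≤ Real.exp (r' * x) + 1 := h1
        _ = Dfun x := by rw [hDx]; ring
        _ ≤ K₁ * Dfun x := le_mul_of_one_le_left (hD0 x hx) hK₁1
  have hF'_est : ∀ (z d : ℂ), z.re ≤ r → ‖d‖ ≤ C₂ → ∀ x ∈ Set.Ioi (0:ℝ),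
      ‖Complex.exp (z * (x:ℂ)) * (d * (x:ℂ))‖ ≤ K₂ * Dfun x := by
    intro z d hzr hdC x hx
    have hx0 : (0:ℝ) < x := hx
    have hKm0 : (0:ℝ) ≤ max (Real.exp r) (1 / (r' - r)) :=
      le_trans (Real.exp_pos r).le (le_max_left _ _)
    have hnorm : ‖Complex.exp (z * (x:ℂ)) * (d * (x:ℂ))‖
        = Real.exp (z.re * x) * (‖d‖ * x) := by
      rw [norm_mul, norm_mul, Complex.norm_exp, hre_mul,
        Complex.norm_real, Real.norm_eq_abs, abs_of_pos hx0]
    have hbase : ‖Complex.exp (z * (x:ℂ)) * (d * (x:ℂ))‖ ≤ C₂ * (Real.exp (r * x) * x) := by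
      rw [hnorm]
      have h1 : Real.exp (z.re * x) ≤ Real.exp (r * x) :=
        Real.exp_le_exp.2 (mul_le_mul_of_nonneg_right hzr hx0.le)
      have h2 : ‖d‖ * x ≤ C₂ * x := mul_le_mul_of_nonneg_right hdC hx0.le
      calc Real.exp (z.re * x) * (‖d‖ * x) ≤ Real.exp (r * x) * (C₂ * x) := by
            apply mul_le_mul h1 h2 (by positivity) (Real.exp_pos _).le
        _ = C₂ * (Real.exp (r * x) * x) := by ring
    by_cases hx1 : x ≤ 1
    · have hiz : Set.indicator (Set.Ioi 1) (fun x => Real.exp (r' * x)) x = 0 :=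
        Set.indicator_of_notMem (by simpa using not_lt.2 hx1) _
      have hDx : Dfun x = x := by
        rw [hDfun_def]
        simp only
        rw [hiz, min_eq_left hx1, add_zero]
      have h3 : Real.exp (r * x) * x ≤ Real.exp r * x := by
        have : Real.exp (r * x) ≤ Real.exp r :=
          Real.exp_le_exp.2 (mul_le_of_le_one_right hr0 hx1)
        exact mul_le_mul_of_nonneg_right this hx0.le
      calc ‖Complex.exp (z * (x:ℂ)) * (d * (x:ℂ))‖ ≤ C₂ * (Real.exp (r * x) * x) := hbase
        _ ≤ C₂ * (Real.exp r * x) := mul_le_mul_of_nonneg_left h3 hC₂0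
        _ ≤ C₂ * (max (Real.exp r) (1 / (r' - r)) * x) := by
            apply mul_le_mul_of_nonneg_left _ hC₂0
            exact mul_le_mul_of_nonneg_right (le_max_left _ _) hx0.le
        _ = K₂ * Dfun x := by rw [hK₂_def, hDx]; ring
    · push_neg at hx1
      have hiz : Set.indicator (Set.Ioi 1) (fun x => Real.exp (r' * x)) x = Real.exp (r' * x) :=
        Set.indicator_of_mem hx1 _
      have hDx : Dfun x = 1 + Real.exp (r' * x) := by
        rw [hDfun_def]
        simp only
        rw [hiz, min_eq_right hx1.le]
      have hrr'0 : (0:ℝ) < r' - r := by linarith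
      have h3 : Real.exp (r * x) * x ≤ (1 / (r' - r)) * Real.exp (r' * x) := by
        have h4 : (r' - r) * x ≤ Real.exp ((r' - r) * x) := by
          have := Real.add_one_le_exp ((r' - r) * x)
          linarith
        have h5 : x ≤ (1 / (r' - r)) * Real.exp ((r' - r) * x) := by
          rw [div_mul_eq_mul_div, one_mul, le_div_iff₀ hrr'0]
          linarith [h4]
        calc Real.exp (r * x) * x
            ≤ Real.exp (r * x) * ((1 / (r' - r)) * Real.exp ((r' - r) * x)) :=
              mul_le_mul_of_nonneg_left h5 (Real.exp_pos _).le
          _ = (1 / (r' - r)) * (Real.exp (r * x) * Real.exp ((r' - r) * x)) := by ring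
          _ = (1 / (r' - r)) * Real.exp (r' * x) := by
              rw [← Real.exp_add]; ring_nf
      have h6 : Real.exp (r' * x) ≤ Dfun x := by
        rw [hDx]; linarith
      calc ‖Complex.exp (z * (x:ℂ)) * (d * (x:ℂ))‖ ≤ C₂ * (Real.exp (r * x) * x) := hbase
        _ ≤ C₂ * ((1 / (r' - r)) * Real.exp (r' * x)) := mul_le_mul_of_nonneg_left h3 hC₂0
        _ ≤ C₂ * (max (Real.exp r) (1 / (r' - r)) * Dfun x) := by
            apply mul_le_mul_of_nonneg_left _ hC₂0
            apply mul_le_mul (le_max_right _ _) h6 (Real.exp_pos _).le hKm0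
        _ = K₂ * Dfun x := by rw [hK₂_def]; ring
  -- a.e. positivity under μ
  have hmem_ae : ∀ᵐ x ∂μ, x ∈ Set.Ioi (0:ℝ) := by
    rw [hμ_def]; exact ae_restrict_mem measurableSet_Ioi
  -- continuity in x of the integrands
  have hcontx : ∀ z : ℂ, Continuous fun x : ℝ => Complex.exp (z * (x:ℂ)) - 1 := fun z =>
    (Complex.continuous_exp.comp (continuous_const.mul Complex.continuous_ofReal)).sub
      continuous_const
  have hcontx' : ∀ z d : ℂ, Continuous fun x : ℝ => Complex.exp (z * (x:ℂ)) * (d * (x:ℂ)) :=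
    fun z d =>
    (Complex.continuous_exp.comp (continuous_const.mul Complex.continuous_ofReal)).mul
      (continuous_const.mul Complex.continuous_ofReal)
  -- derivative of the inner integral
  have inner_deriv : ∀ s ∈ Set.Icc (0:ℝ) t, ∀ u₁ ∈ Metric.ball u₀ R,
      HasDerivAt
        (fun u : ℂ => ∫ x in Set.Ioi (0:ℝ), (Complex.exp (ufc t β ρ u A s * (x:ℂ)) - 1) ∂ν)
        (∫ x in Set.Ioi (0:ℝ),
          Complex.exp (ufc t β ρ u₁ A s * (x:ℂ)) * (dufc u₁ s * (x:ℂ)) ∂ν) u₁ := by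
    intro s hs u₁ hu₁
    have hd : dist u₁ u₀ < R := Metric.mem_ball.1 hu₁
    have hε' : 0 < R - dist u₁ u₀ := sub_pos.2 hd
    have hsub : Metric.ball u₁ (R - dist u₁ u₀) ⊆ Metric.closedBall u₀ R := by
      intro v hv
      have h1 : dist v u₁ < R - dist u₁ u₀ := Metric.mem_ball.1 hv
      have h2 := dist_triangle v u₁ u₀
      exact Metric.mem_closedBall.2 (by linarith)
    have hball : u₁ ∈ Metric.closedBall u₀ R := Metric.mem_closedBall.2 hd.le
    have key := hasDerivAt_integral_of_dominated_loc_of_deriv_le (μ := μ) (𝕜 := ℂ)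
      (F := fun (u : ℂ) (x : ℝ) => Complex.exp (ufc t β ρ u A s * (x:ℂ)) - 1)
      (F' := fun (u : ℂ) (x : ℝ) => Complex.exp (ufc t β ρ u A s * (x:ℂ)) * (dufc u s * (x:ℂ)))
      (x₀ := u₁) (bound := fun x => K₂ * Dfun x) (Metric.ball_mem_nhds u₁ hε')
      (Filter.Eventually.of_forall fun u => (hcontx _).aestronglyMeasurable)
      (Integrable.mono' (hD_int.const_mul K₁) (hcontx _).aestronglyMeasurable
        (hmem_ae.mono fun x hx =>
          hF_est _ (hz_re u₁ hball s hs) (hz_norm u₁ hball s hs) x hx))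
      ((hcontx' _ _).aestronglyMeasurable)
      (hmem_ae.mono fun x hx u hu =>
        hF'_est _ _ (hz_re u (hsub hu) s hs) (hd_bound u (hsub hu) s hs) x hx)
      (hD_int.const_mul K₂)
      (Filter.Eventually.of_forall fun x u _ => by
        have h2 : HasDerivAt (fun u : ℂ => ufc t β ρ u A s * (x:ℂ)) (dufc u s * (x:ℂ)) u :=
          (hufc_deriv s u).mul_const _
        exact h2.cexp.sub_const 1)
    exact key.2
  -- derivative of θ_L ∘ (u ↦ u f_u)
  have theta_deriv : ∀ s ∈ Set.Icc (0:ℝ) t, ∀ u₁ ∈ Metric.ball u₀ R,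
      HasDerivAt (fun u : ℂ => thetaL γ₀ ν (ufc t β ρ u A s))
        ((γ₀:ℂ) * dufc u₁ s + ∫ x in Set.Ioi (0:ℝ),
          Complex.exp (ufc t β ρ u₁ A s * (x:ℂ)) * (dufc u₁ s * (x:ℂ)) ∂ν) u₁ := by
    intro s hs u₁ hu₁
    have h1 := (hufc_deriv s u₁).const_mul (γ₀:ℂ)
    have h2 := inner_deriv s hs u₁ hu₁
    have h3 := h1.add h2
    simp only [thetaL]
    exact h3
  -- uniform bound for the derivative
  have hΘb : ∀ s ∈ Set.Icc (0:ℝ) t, ∀ u₁ ∈ Metric.closedBall u₀ R,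
      ‖(γ₀:ℂ) * dufc u₁ s + ∫ x in Set.Ioi (0:ℝ),
          Complex.exp (ufc t β ρ u₁ A s * (x:ℂ)) * (dufc u₁ s * (x:ℂ)) ∂ν‖
        ≤ γ₀ * C₂ + K₂ * ∫ x in Set.Ioi (0:ℝ), Dfun x ∂ν := by
    intro s hs u₁ hu₁
    have h1 : ‖(γ₀:ℂ) * dufc u₁ s‖ ≤ γ₀ * C₂ := by
      rw [norm_mul, Complex.norm_real, Real.norm_eq_abs, abs_of_nonneg hγ₀]
      exact mul_le_mul_of_nonneg_left (hd_bound u₁ hu₁ s hs) hγ₀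
    have h2 : ‖∫ x in Set.Ioi (0:ℝ),
        Complex.exp (ufc t β ρ u₁ A s * (x:ℂ)) * (dufc u₁ s * (x:ℂ)) ∂ν‖
        ≤ K₂ * ∫ x in Set.Ioi (0:ℝ), Dfun x ∂ν := by
      have h3 := norm_integral_le_of_norm_le (hD_int.const_mul K₂)
        (hmem_ae.mono fun x hx =>
          hF'_est _ _ (hz_re u₁ hu₁ s hs) (hd_bound u₁ hu₁ s hs) x hx)
      rwa [integral_const_mul] at h3
    calc ‖(γ₀:ℂ) * dufc u₁ s + ∫ x in Set.Ioi (0:ℝ),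
            Complex.exp (ufc t β ρ u₁ A s * (x:ℂ)) * (dufc u₁ s * (x:ℂ)) ∂ν‖
        ≤ ‖(γ₀:ℂ) * dufc u₁ s‖ + ‖∫ x in Set.Ioi (0:ℝ),
            Complex.exp (ufc t β ρ u₁ A s * (x:ℂ)) * (dufc u₁ s * (x:ℂ)) ∂ν‖ := norm_add_le _ _
      _ ≤ γ₀ * C₂ + K₂ * ∫ x in Set.Ioi (0:ℝ), Dfun x ∂ν := add_le_add h1 h2
  -- continuity in s
  have cont_ufc : ∀ u : ℂ, Continuous fun s : ℝ => ufc t β ρ u A s := by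
    intro u
    have heq : (fun s : ℝ => ufc t β ρ u A s)
        = fun s : ℝ => ((c s : ℝ):ℂ) * (u * (β:ℂ) + u ^ 2 / 2) + (ρ:ℂ) * u := by
      funext s
      simp only [hc_def, ufc]
    rw [heq]
    exact ((Complex.continuous_ofReal.comp hc_cont).mul continuous_const).add continuous_const
  have cont_dufc : ∀ u : ℂ, Continuous fun s : ℝ => dufc u s := by
    intro u
    rw [hdufc_def]
    exact ((Complex.continuous_ofReal.comp hc_cont).mul continuous_const).add continuous_const
  have contF : ∀ u ∈ Metric.closedBall u₀ R,
      ContinuousOn (fun s => thetaL γ₀ ν (ufc t β ρ u A s)) (Set.Icc (0:ℝ) t) := by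
    intro u hu
    simp only [thetaL]
    apply ContinuousOn.add
    · exact (continuous_const.mul (cont_ufc u)).continuousOn
    · exact continuousOn_of_dominated (μ := μ) (bound := fun x => K₁ * Dfun x)
        (fun s _ => (hcontx _).aestronglyMeasurable)
        (fun s hs => hmem_ae.mono fun x hx =>
          hF_est _ (hz_re u hu s hs) (hz_norm u hu s hs) x hx)
        (hD_int.const_mul K₁)
        (Filter.Eventually.of_forall fun x => Continuous.continuousOn
          ((Complex.continuous_exp.comp ((cont_ufc u).mul continuous_const)).sub
            continuous_const))
  have contF' : ContinuousOn (fun s => (γ₀:ℂ) * dufc u₀ s + ∫ x in Set.Ioi (0:ℝ),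
      Complex.exp (ufc t β ρ u₀ A s * (x:ℂ)) * (dufc u₀ s * (x:ℂ)) ∂ν)
      (Set.Icc (0:ℝ) t) := by
    have hu₀b : u₀ ∈ Metric.closedBall u₀ R := Metric.mem_closedBall_self hR.le
    apply ContinuousOn.add
    · exact (continuous_const.mul (cont_dufc u₀)).continuousOn
    · exact continuousOn_of_dominated (μ := μ) (bound := fun x => K₂ * Dfun x)
        (fun s _ => (hcontx' _ _).aestronglyMeasurable)
        (fun s hs => hmem_ae.mono fun x hx =>
          hF'_est _ _ (hz_re u₀ hu₀b s hs) (hd_bound u₀ hu₀b s hs) x hx)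
        (hD_int.const_mul K₂)
        (Filter.Eventually.of_forall fun x => Continuous.continuousOn
          ((Complex.continuous_exp.comp ((cont_ufc u₀).mul continuous_const)).mul
            ((cont_dufc u₀).mul continuous_const)))
  -- assemble via the interval-integral parametric derivative theorem
  have hIoc : Set.uIoc (0:ℝ) t = Set.Ioc 0 t := Set.uIoc_of_le ht.le
  have hmono : volume.restrict (Set.uIoc (0:ℝ) t) ≤ volume.restrict (Set.Icc (0:ℝ) t) := by
    rw [hIoc]
    exact Measure.restrict_mono Set.Ioc_subset_Icc_self le_rfl
  have hmeasF : ∀ᶠ u in nhds u₀, AEStronglyMeasurable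
      (fun s => thetaL γ₀ ν (ufc t β ρ u A s)) (volume.restrict (Set.uIoc (0:ℝ) t)) := by
    refine Filter.eventually_of_mem (Metric.ball_mem_nhds u₀ hR) fun u hu => ?_
    exact ((contF u (Metric.ball_subset_closedBall hu)).aestronglyMeasurable
      measurableSet_Icc).mono_measure hmono
  have hFint : IntervalIntegrable (fun s => thetaL γ₀ ν (ufc t β ρ u₀ A s)) volume 0 t := by
    apply ContinuousOn.intervalIntegrable
    rw [Set.uIcc_of_le ht.le]
    exact contF u₀ (Metric.mem_closedBall_self hR.le)
  have hF'meas : AEStronglyMeasurable (fun s => (γ₀:ℂ) * dufc u₀ s + ∫ x in Set.Ioi (0:ℝ),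
      Complex.exp (ufc t β ρ u₀ A s * (x:ℂ)) * (dufc u₀ s * (x:ℂ)) ∂ν)
      (volume.restrict (Set.uIoc (0:ℝ) t)) :=
    (contF'.aestronglyMeasurable measurableSet_Icc).mono_measure hmono
  have h_bound : ∀ᵐ s ∂(volume : Measure ℝ), s ∈ Set.uIoc (0:ℝ) t →
      ∀ u ∈ Metric.ball u₀ R, ‖(γ₀:ℂ) * dufc u s + ∫ x in Set.Ioi (0:ℝ),
          Complex.exp (ufc t β ρ u A s * (x:ℂ)) * (dufc u s * (x:ℂ)) ∂ν‖
        ≤ γ₀ * C₂ + K₂ * ∫ x in Set.Ioi (0:ℝ), Dfun x ∂ν :=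
    Filter.Eventually.of_forall fun s hsi u hu =>
      hΘb s (by rw [hIoc] at hsi; exact Set.Ioc_subset_Icc_self hsi) u
        (Metric.ball_subset_closedBall hu)
  have h_diff : ∀ᵐ s ∂(volume : Measure ℝ), s ∈ Set.uIoc (0:ℝ) t →
      ∀ u ∈ Metric.ball u₀ R,
        HasDerivAt (fun u : ℂ => thetaL γ₀ ν (ufc t β ρ u A s))
          ((γ₀:ℂ) * dufc u s + ∫ x in Set.Ioi (0:ℝ),
            Complex.exp (ufc t β ρ u A s * (x:ℂ)) * (dufc u s * (x:ℂ)) ∂ν) u :=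
    Filter.Eventually.of_forall fun s hsi u hu =>
      theta_deriv s (by rw [hIoc] at hsi; exact Set.Ioc_subset_Icc_self hsi) u hu
  obtain ⟨-, hder⟩ := intervalIntegral.hasDerivAt_integral_of_dominated_loc_of_deriv_le
    (F := fun (u : ℂ) (s : ℝ) => thetaL γ₀ ν (ufc t β ρ u A s))
    (F' := fun (u : ℂ) (s : ℝ) => (γ₀:ℂ) * dufc u s + ∫ x in Set.Ioi (0:ℝ),
      Complex.exp (ufc t β ρ u A s * (x:ℂ)) * (dufc u s * (x:ℂ)) ∂ν)
    (bound := fun _ => γ₀ * C₂ + K₂ * ∫ x in Set.Ioi (0:ℝ), Dfun x ∂ν)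
    (Metric.ball_mem_nhds u₀ hR) hmeasF hFint hF'meas h_bound intervalIntegrable_const h_diff
  exact hder.differentiableAt
end

section
/- Fix t > 0, ε > 0, β, ρ ∈ ℝ, let δ = -|β| - |ρ|/t + √((|β| + |ρ|/t)² + 2ε/t), let γ₀ ≥ 0, let ν be a Borel measure on ℝ concentrated on (0,∞) with ∫ min(x,1) ν(dx) < ∞ and ∫_{x>1} e^{rx} ν(dx) < ∞ for all r < ε, and let π be a Borel probability measure on ℝ concentrated on (-∞,0). Then the function Θ(u) = ∫_{(-∞,0)} ∫₀ᵗ θ_L(u·f_u(A,s)) ds π(dA) is well defined and complex differentiable (analytic) on the open strip S = {u ∈ ℂ : |Re u| < δ}. -/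
open MeasureTheory

/-- `Θ(u) = ∫_{(-∞,0)} ∫₀ᵗ θ_L(u·f_u(A,s)) ds π(dA)`. -/
noncomputable def Theta (t β ρ γ₀ : ℝ) (ν π : Measure ℝ) (u : ℂ) : ℂ :=
  ∫ A in Set.Iio (0 : ℝ), (∫ s in (0 : ℝ)..t, thetaL γ₀ ν (ufc t β ρ u A s)) ∂π

section AuxStmt9
open Set Metric


lemma aux_norm_cexp_sub_one_le (w : ℂ) :
    ‖Complex.exp w - 1‖ ≤ ‖w‖ * Real.exp (max w.re 0) := by
  have hd : ∀ τ ∈ Set.uIcc (0:ℝ) 1,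
      HasDerivAt (fun τ : ℝ => Complex.exp ((τ:ℂ) * w)) (w * Complex.exp ((τ:ℂ) * w)) τ := by
    intro τ _
    have : HasDerivAt (fun z : ℂ => Complex.exp (z * w)) (w * Complex.exp ((τ:ℂ) * w)) (τ:ℂ) := by
      simpa [mul_comm] using ((hasDerivAt_id ((τ:ℝ):ℂ)).mul_const w).cexp
    exact this.comp_ofReal
  have hint : IntervalIntegrable (fun τ : ℝ => w * Complex.exp ((τ:ℂ) * w)) volume 0 1 :=
    (Continuous.intervalIntegrable (by continuity) 0 1)
  have heq := intervalIntegral.integral_eq_sub_of_hasDerivAt hd hint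
  simp only [Complex.ofReal_one, Complex.ofReal_zero, one_mul, zero_mul, Complex.exp_zero] at heq
  have hb : ∀ τ ∈ Set.uIoc (0:ℝ) 1, ‖w * Complex.exp ((τ:ℂ) * w)‖ ≤ ‖w‖ * Real.exp (max w.re 0) := by
    intro τ hτ
    rw [Set.uIoc_of_le (by norm_num : (0:ℝ) ≤ 1)] at hτ
    rw [norm_mul, Complex.norm_exp]
    refine mul_le_mul_of_nonneg_left ?_ (norm_nonneg _)
    rw [Real.exp_le_exp]
    have : ((τ:ℂ) * w).re = τ * w.re := by simp
    rw [this]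
    rcases le_or_gt w.re 0 with h | h
    · calc τ * w.re ≤ 0 := mul_nonpos_of_nonneg_of_nonpos (le_of_lt hτ.1) h
        _ ≤ max w.re 0 := le_max_right _ _
    · calc τ * w.re ≤ 1 * w.re := by nlinarith [hτ.2, hτ.1]
        _ = w.re := one_mul _
        _ ≤ max w.re 0 := le_max_left _ _
  have := intervalIntegral.norm_integral_le_of_norm_le_const hb
  rw [heq] at this
  simpa using this

lemma aux_integrable_of_le {ε : ℝ} {ν : Measure ℝ}
    (hmin : Integrable (fun x : ℝ => min x 1) ν)
    (hexp : ∀ r : ℝ, r < ε → IntegrableOn (fun x : ℝ => Real.exp (r * x)) {x | 1 < x} ν)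
    {r' C₁ C₂ : ℝ} (h1 : r' < ε) (f : ℝ → ℝ) (hfc : Continuous f)
    (hb1 : ∀ x ∈ Ioc (0:ℝ) 1, |f x| ≤ C₁ * x)
    (hb2 : ∀ x ∈ Ioi (1:ℝ), |f x| ≤ C₂ * Real.exp (r' * x)) :
    IntegrableOn f (Ioi 0) ν := by
  have hs : Ioc (0:ℝ) 1 ∪ Ioi 1 = Ioi 0 := Ioc_union_Ioi_eq_Ioi (by norm_num)
  rw [← hs]
  refine IntegrableOn.union ?_ ?_
  · refine Integrable.mono' ((hmin.const_mul C₁).integrableOn) hfc.aestronglyMeasurable.restrict ?_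
    filter_upwards [ae_restrict_mem measurableSet_Ioc] with x hx
    calc ‖f x‖ = |f x| := rfl
      _ ≤ C₁ * x := hb1 x hx
      _ = C₁ * min x 1 := by rw [min_eq_left hx.2]
  · have h' : IntegrableOn (fun x : ℝ => Real.exp (r' * x)) {x | 1 < x} ν := hexp r' h1
    have hset : {x : ℝ | 1 < x} = Ioi 1 := rfl
    rw [hset] at h'
    refine Integrable.mono' (h'.const_mul C₂) hfc.aestronglyMeasurable.restrict ?_
    filter_upwards [ae_restrict_mem measurableSet_Ioi] with x hx
    exact hb2 x hx

lemma aux_integrable_xexp {ε : ℝ} (hε : 0 < ε) {ν : Measure ℝ}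
    (hmin : Integrable (fun x : ℝ => min x 1) ν)
    (hexp : ∀ r : ℝ, r < ε → IntegrableOn (fun x : ℝ => Real.exp (r * x)) {x | 1 < x} ν)
    {r : ℝ} (hr0 : 0 < r) (hrε : r < ε) :
    IntegrableOn (fun x : ℝ => x * Real.exp (r * x)) (Ioi 0) ν := by
  set r' := (r + ε) / 2 with hr'
  have hrr' : r < r' := by simp [hr']; linarith
  have hr'ε : r' < ε := by simp [hr']; linarith
  refine aux_integrable_of_le hmin hexp (C₁ := Real.exp r) (C₂ := 1 / (r' - r)) hr'ε _
    (by continuity) ?_ ?_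
  · intro x hx
    rw [abs_of_nonneg (mul_nonneg hx.1.le (Real.exp_pos _).le)]
    have : Real.exp (r * x) ≤ Real.exp r := by
      rw [Real.exp_le_exp]; nlinarith [hx.1, hx.2]
    nlinarith [hx.1]
  · intro x hx
    have hx1 : (1:ℝ) < x := hx
    have hc : 0 < r' - r := by linarith
    have h2 : (r' - r) * x ≤ Real.exp ((r' - r) * x) := by
      have := Real.add_one_le_exp ((r' - r) * x); linarith
    have hxle : x ≤ Real.exp ((r' - r) * x) / (r' - r) := by
      rw [le_div_iff₀ hc]; linarith [h2]
    rw [abs_of_nonneg (by positivity)]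
    calc x * Real.exp (r * x) ≤ (Real.exp ((r' - r) * x) / (r' - r)) * Real.exp (r * x) :=
          mul_le_mul_of_nonneg_right hxle (Real.exp_pos _).le
      _ = 1 / (r' - r) * Real.exp (r' * x) := by
          rw [div_mul_eq_mul_div, ← Real.exp_add, div_eq_mul_inv, one_div, mul_comm]
          ring_nf
  
lemma aux_integrable_x2exp {ε : ℝ} (hε : 0 < ε) {ν : Measure ℝ}
    (hmin : Integrable (fun x : ℝ => min x 1) ν)
    (hexp : ∀ r : ℝ, r < ε → IntegrableOn (fun x : ℝ => Real.exp (r * x)) {x | 1 < x} ν)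
    {r : ℝ} (hr0 : 0 < r) (hrε : r < ε) :
    IntegrableOn (fun x : ℝ => x ^ 2 * Real.exp (r * x)) (Ioi 0) ν := by
  set c := (ε - r) / 4 with hc'
  have hc : 0 < c := by simp [hc']; linarith
  have hr'ε : r + 2 * c < ε := by simp [hc']; linarith
  refine aux_integrable_of_le hmin hexp (C₁ := Real.exp r) (C₂ := 1 / c ^ 2) hr'ε _
    (by continuity) ?_ ?_
  · intro x hx
    rw [abs_of_nonneg (mul_nonneg (sq_nonneg _) (Real.exp_pos _).le)]
    have h1 : Real.exp (r * x) ≤ Real.exp r := by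
      rw [Real.exp_le_exp]; nlinarith [hx.1, hx.2]
    have h3 : x ^ 2 ≤ x := by nlinarith [hx.1, hx.2]
    calc x ^ 2 * Real.exp (r * x) ≤ x ^ 2 * Real.exp r :=
          mul_le_mul_of_nonneg_left h1 (sq_nonneg _)
      _ ≤ x * Real.exp r := mul_le_mul_of_nonneg_right h3 (Real.exp_pos _).le
      _ = Real.exp r * x := mul_comm _ _
  · intro x hx
    have hx1 : (1:ℝ) < x := hx
    have h2 : c * x ≤ Real.exp (c * x) := by
      have := Real.add_one_le_exp (c * x); linarith
    have hcx : 0 ≤ c * x := by positivity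
    have hsq : (c * x) ^ 2 ≤ Real.exp (c * x) ^ 2 := by
      apply pow_le_pow_left₀ hcx h2
    have hxsq : x ^ 2 ≤ Real.exp (2 * c * x) / c ^ 2 := by
      rw [le_div_iff₀ (by positivity)]
      calc x ^ 2 * c ^ 2 = (c * x) ^ 2 := by ring
        _ ≤ Real.exp (c * x) ^ 2 := hsq
        _ = Real.exp (2 * c * x) := by rw [← Real.exp_nat_mul]; ring_nf
    rw [abs_of_nonneg (by positivity)]
    calc x ^ 2 * Real.exp (r * x) ≤ (Real.exp (2 * c * x) / c ^ 2) * Real.exp (r * x) :=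
          mul_le_mul_of_nonneg_right hxsq (Real.exp_pos _).le
      _ = 1 / c ^ 2 * Real.exp ((r + 2 * c) * x) := by
          rw [div_mul_eq_mul_div, ← Real.exp_add, div_eq_mul_inv, one_div, mul_comm]
          ring_nf

variable {ε : ℝ} {ν : Measure ℝ}

lemma aux_re_mul (z : ℂ) (x : ℝ) : (z * (x:ℂ)).re = z.re * x := by
  simp [Complex.mul_re]

lemma aux_norm_xexp (z : ℂ) {x : ℝ} (hx : 0 < x) {r : ℝ} (hzr : z.re ≤ r) :
    ‖(x:ℂ) * Complex.exp (z * (x:ℂ))‖ ≤ x * Real.exp (r * x) := by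
  rw [norm_mul, Complex.norm_exp, aux_re_mul,
    Complex.norm_real, Real.norm_eq_abs, abs_of_pos hx]
  exact mul_le_mul_of_nonneg_left (Real.exp_le_exp.2 (by nlinarith)) hx.le

lemma aux_norm_exp_sub_one (z : ℂ) {x : ℝ} (hx : 0 < x) {r : ℝ} (hzr : z.re ≤ r) (hr0 : 0 < r) :
    ‖Complex.exp (z * (x:ℂ)) - 1‖ ≤ ‖z‖ * (x * Real.exp (r * x)) := by
  have h := aux_norm_cexp_sub_one_le (z * (x:ℂ))
  have h1 : ‖z * (x:ℂ)‖ = ‖z‖ * x := by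
    rw [norm_mul, Complex.norm_real, Real.norm_eq_abs, abs_of_pos hx]
  have h2 : max (z * (x:ℂ)).re 0 ≤ r * x := by
    rw [aux_re_mul]
    rcases le_or_gt z.re 0 with h' | h'
    · exact max_le (by nlinarith) (by positivity)
    · exact max_le (by nlinarith) (by positivity)
  calc ‖Complex.exp (z * (x:ℂ)) - 1‖ ≤ ‖z * (x:ℂ)‖ * Real.exp (max (z * (x:ℂ)).re 0) := h
    _ ≤ (‖z‖ * x) * Real.exp (r * x) := by
        rw [h1]; exact mul_le_mul_of_nonneg_left (Real.exp_le_exp.2 h2) (by positivity)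
    _ = ‖z‖ * (x * Real.exp (r * x)) := by ring

lemma aux_int_G (hε : 0 < ε)
    (hmin : Integrable (fun x : ℝ => min x 1) ν)
    (hexp : ∀ r : ℝ, r < ε → IntegrableOn (fun x : ℝ => Real.exp (r * x)) {x | 1 < x} ν)
    {z : ℂ} {r : ℝ} (hzr : z.re ≤ r) (hr0 : 0 < r) (hrε : r < ε) :
    IntegrableOn (fun x : ℝ => Complex.exp (z * (x:ℂ)) - 1) (Ioi 0) ν := by
  refine Integrable.mono' (((aux_integrable_xexp hε hmin hexp hr0 hrε).const_mul ‖z‖))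
    (Continuous.aestronglyMeasurable (by continuity)).restrict ?_
  filter_upwards [ae_restrict_mem measurableSet_Ioi] with x hx
  exact aux_norm_exp_sub_one z hx hzr hr0

lemma aux_int_G1 (hε : 0 < ε)
    (hmin : Integrable (fun x : ℝ => min x 1) ν)
    (hexp : ∀ r : ℝ, r < ε → IntegrableOn (fun x : ℝ => Real.exp (r * x)) {x | 1 < x} ν)
    {z : ℂ} {r : ℝ} (hzr : z.re ≤ r) (hr0 : 0 < r) (hrε : r < ε) :
    IntegrableOn (fun x : ℝ => (x:ℂ) * Complex.exp (z * (x:ℂ))) (Ioi 0) ν := by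
  refine Integrable.mono' (aux_integrable_xexp hε hmin hexp hr0 hrε)
    (Continuous.aestronglyMeasurable (by continuity)).restrict ?_
  filter_upwards [ae_restrict_mem measurableSet_Ioi] with x hx
  exact aux_norm_xexp z hx hzr

lemma aux_ball_re {z w : ℂ} {η : ℝ} (hw : w ∈ ball z η) : w.re ≤ z.re + η := by
  have := Complex.abs_re_le_norm (w - z)
  have h2 : ‖w - z‖ < η := by simpa [Complex.dist_eq] using hw
  have h3 : (w - z).re = w.re - z.re := by simp
  rw [h3] at this
  have := abs_le.1 (this.trans h2.le)
  linarith [this.2]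

lemma aux_G_hasDerivAt (hε : 0 < ε)
    (hmin : Integrable (fun x : ℝ => min x 1) ν)
    (hexp : ∀ r : ℝ, r < ε → IntegrableOn (fun x : ℝ => Real.exp (r * x)) {x | 1 < x} ν)
    {z : ℂ} (hz : z.re < ε) :
    HasDerivAt (fun w : ℂ => ∫ x in Ioi (0:ℝ), (Complex.exp (w * (x:ℂ)) - 1) ∂ν)
      (∫ x in Ioi (0:ℝ), (x:ℂ) * Complex.exp (z * (x:ℂ)) ∂ν) z := by
  set η := (ε - z.re) / 2 with hη
  have hη0 : 0 < η := by simp [hη]; linarith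
  set r := max ((z.re + ε) / 2) (ε / 2) with hr
  have hr0 : 0 < r := lt_of_lt_of_le (by linarith) (le_max_right _ _)
  have hrε : r < ε := max_lt (by linarith) (by linarith)
  have hzr : z.re ≤ r := le_trans (by linarith) (le_max_left _ _)
  have hball : ∀ w : ℂ, w ∈ ball z η → w.re ≤ r := fun w hw =>
    le_trans (aux_ball_re hw) (le_trans (by simp [hη]; linarith) (le_max_left _ _))
  refine (hasDerivAt_integral_of_dominated_loc_of_deriv_le (F := fun w x =>
      Complex.exp (w * (x:ℂ)) - 1) (F' := fun w x => (x:ℂ) * Complex.exp (w * (x:ℂ)))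
      (bound := fun x => x * Real.exp (r * x)) (ball_mem_nhds z hη0) ?_ ?_ ?_ ?_ ?_ ?_).2
  · exact Filter.Eventually.of_forall fun w =>
      (Continuous.aestronglyMeasurable (by continuity)).restrict
  · exact aux_int_G hε hmin hexp hzr hr0 hrε
  · exact (Continuous.aestronglyMeasurable (by continuity)).restrict
  · filter_upwards [ae_restrict_mem measurableSet_Ioi] with x hx
    exact fun w hw => aux_norm_xexp w hx (hball w hw)
  · exact aux_integrable_xexp hε hmin hexp hr0 hrε
  · filter_upwards [ae_restrict_mem measurableSet_Ioi] with x hx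
    intro w hw
    simpa [mul_comm] using (((hasDerivAt_id w).mul_const (x:ℂ)).cexp.sub_const 1)

lemma aux_G1_hasDerivAt (hε : 0 < ε)
    (hmin : Integrable (fun x : ℝ => min x 1) ν)
    (hexp : ∀ r : ℝ, r < ε → IntegrableOn (fun x : ℝ => Real.exp (r * x)) {x | 1 < x} ν)
    {z : ℂ} (hz : z.re < ε) :
    HasDerivAt (fun w : ℂ => ∫ x in Ioi (0:ℝ), (x:ℂ) * Complex.exp (w * (x:ℂ)) ∂ν)
      (∫ x in Ioi (0:ℝ), ((x:ℂ))^2 * Complex.exp (z * (x:ℂ)) ∂ν) z := by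
  set η := (ε - z.re) / 2 with hη
  have hη0 : 0 < η := by simp [hη]; linarith
  set r := max ((z.re + ε) / 2) (ε / 2) with hr
  have hr0 : 0 < r := lt_of_lt_of_le (by linarith) (le_max_right _ _)
  have hrε : r < ε := max_lt (by linarith) (by linarith)
  have hzr : z.re ≤ r := le_trans (by linarith) (le_max_left _ _)
  have hball : ∀ w : ℂ, w ∈ ball z η → w.re ≤ r := fun w hw =>
    le_trans (aux_ball_re hw) (le_trans (by simp [hη]; linarith) (le_max_left _ _))
  refine (hasDerivAt_integral_of_dominated_loc_of_deriv_le (F := fun w x =>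
      (x:ℂ) * Complex.exp (w * (x:ℂ))) (F' := fun w x => ((x:ℂ))^2 * Complex.exp (w * (x:ℂ)))
      (bound := fun x => x ^ 2 * Real.exp (r * x)) (ball_mem_nhds z hη0) ?_ ?_ ?_ ?_ ?_ ?_).2
  · exact Filter.Eventually.of_forall fun w =>
      (Continuous.aestronglyMeasurable (by continuity)).restrict
  · exact aux_int_G1 hε hmin hexp hzr hr0 hrε
  · exact (Continuous.aestronglyMeasurable (by continuity)).restrict
  · filter_upwards [ae_restrict_mem measurableSet_Ioi] with x hx
    intro w hw
    have h1 : ‖((x:ℂ))^2 * Complex.exp (w * (x:ℂ))‖ = x * ‖(x:ℂ) * Complex.exp (w * (x:ℂ))‖ := by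
      rw [norm_mul, norm_mul, norm_pow, Complex.norm_real, Real.norm_eq_abs, abs_of_pos hx]
      ring
    rw [h1, sq]
    rw [mul_assoc]
    exact mul_le_mul_of_nonneg_left (aux_norm_xexp w hx (hball w hw)) hx.le
  · exact aux_integrable_x2exp hε hmin hexp hr0 hrε
  · filter_upwards [ae_restrict_mem measurableSet_Ioi] with x hx
    intro w hw
    have := (((hasDerivAt_id w).mul_const (x:ℂ)).cexp).const_mul (x:ℂ)
    simpa [sq, mul_comm, mul_assoc, mul_left_comm] using this
lemma aux_c_mem {t A s : ℝ} (ht : 0 < t) (hA : A < 0) (hs : s ∈ Icc (0:ℝ) t) :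
    0 ≤ (Real.exp (A * (t - s)) - 1) / A ∧ (Real.exp (A * (t - s)) - 1) / A ≤ t := by
  have hts : 0 ≤ t - s := by linarith [hs.2]
  have h1 : Real.exp (A * (t - s)) ≤ 1 := by
    rw [← Real.exp_zero]
    exact Real.exp_le_exp.2 (by nlinarith)
  constructor
  · rw [div_nonneg_iff]
    right
    exact ⟨by linarith, hA.le⟩
  · rw [div_le_iff_of_neg hA]
    have := Real.add_one_le_exp (A * (t - s))
    nlinarith [hs.1]

lemma aux_ufc_re {t β ρ : ℝ} (ht : 0 < t) {u : ℂ} {A s : ℝ} (hA : A < 0) (hs : s ∈ Icc (0:ℝ) t) :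
    (ufc t β ρ u A s).re ≤ t * (|u.re| * |β| + u.re ^ 2 / 2) + |ρ| * |u.re| := by
  obtain ⟨hc0, hct⟩ := aux_c_mem ht hA hs
  set c := (Real.exp (A * (t - s)) - 1) / A with hc
  have hw : (u * (β:ℂ) + u ^ 2 / 2).re = u.re * β + (u.re ^ 2 - u.im ^ 2) / 2 := by
    simp [Complex.add_re, Complex.mul_re, Complex.div_re, Complex.normSq, pow_two]
    try ring
  have hre : (ufc t β ρ u A s).re = c * (u.re * β + (u.re ^ 2 - u.im ^ 2) / 2) + ρ * u.re := by
    rw [show ufc t β ρ u A s = (c:ℂ) * (u * (β:ℂ) + u ^ 2 / 2) + (ρ:ℂ) * u from rfl,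
      Complex.add_re, Complex.re_ofReal_mul, Complex.re_ofReal_mul, hw]
  rw [hre]
  have hXY : u.re * β + (u.re ^ 2 - u.im ^ 2) / 2 ≤ |u.re| * |β| + u.re ^ 2 / 2 := by
    have := le_abs_self (u.re * β)
    rw [abs_mul] at this
    nlinarith [sq_nonneg u.im]
  have hY0 : 0 ≤ |u.re| * |β| + u.re ^ 2 / 2 := by positivity
  have h1 : c * (u.re * β + (u.re ^ 2 - u.im ^ 2) / 2) ≤ t * (|u.re| * |β| + u.re ^ 2 / 2) := by
    calc c * (u.re * β + (u.re ^ 2 - u.im ^ 2) / 2) ≤ c * (|u.re| * |β| + u.re ^ 2 / 2) :=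
          mul_le_mul_of_nonneg_left hXY hc0
      _ ≤ t * (|u.re| * |β| + u.re ^ 2 / 2) := mul_le_mul_of_nonneg_right hct hY0
  have h2 : ρ * u.re ≤ |ρ| * |u.re| := by
    calc ρ * u.re ≤ |ρ * u.re| := le_abs_self _
      _ = |ρ| * |u.re| := abs_mul _ _
  linarith

lemma aux_ufc_norm {t β ρ : ℝ} (ht : 0 < t) {u : ℂ} {A s : ℝ} (hA : A < 0) (hs : s ∈ Icc (0:ℝ) t) :
    ‖ufc t β ρ u A s‖ ≤ t * ‖u * (β:ℂ) + u ^ 2 / 2‖ + |ρ| * ‖u‖ := by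
  obtain ⟨hc0, hct⟩ := aux_c_mem ht hA hs
  calc ‖ufc t β ρ u A s‖ ≤ ‖(((Real.exp (A * (t - s)) - 1) / A : ℝ) : ℂ) * (u * (β:ℂ) + u ^ 2 / 2)‖
        + ‖(ρ:ℂ) * u‖ := norm_add_le _ _
    _ ≤ t * ‖u * (β:ℂ) + u ^ 2 / 2‖ + |ρ| * ‖u‖ := by
        rw [norm_mul, norm_mul, Complex.norm_real, Real.norm_eq_abs, Complex.norm_real,
          Real.norm_eq_abs, abs_of_nonneg hc0]
        exact add_le_add (mul_le_mul_of_nonneg_right hct (norm_nonneg _)) le_rfl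

lemma aux_phi_lt_eps {t ε β ρ : ℝ} (ht : 0 < t) (hε : 0 < ε) {x : ℝ} (hx0 : 0 ≤ x)
    (hxδ : x < -|β| - |ρ| / t + Real.sqrt ((|β| + |ρ| / t) ^ 2 + 2 * ε / t)) :
    t * (x * |β| + x ^ 2 / 2) + |ρ| * x < ε := by
  set B := |β| + |ρ| / t with hB
  set S := Real.sqrt (B ^ 2 + 2 * ε / t) with hS
  have hS2 : S ^ 2 = B ^ 2 + 2 * ε / t := Real.sq_sqrt (by positivity)
  have hB0 : 0 ≤ B := by positivity
  have hxD : x < -B + S := by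
    have : -|β| - |ρ| / t = -B := by rw [hB]; ring
    rw [← this]; exact hxδ
  set D := -B + S with hD
  have hD0 : 0 < D := lt_of_le_of_lt hx0 hxD
  have hphiD : (t / 2) * D ^ 2 + (t * |β| + |ρ|) * D = ε := by
    have htne : t ≠ 0 := ne_of_gt ht
    have h1 : t * B = t * |β| + |ρ| := by
      rw [hB]; field_simp
    have h2 : D ^ 2 + 2 * B * D = 2 * ε / t := by
      have hDB : (D + B) ^ 2 = S ^ 2 := by rw [hD]; ring
      linear_combination hDB + hS2
    have h3 : t * (D ^ 2 + 2 * B * D) = 2 * ε := by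
      rw [h2]; field_simp
    rw [← h1]
    linear_combination h3 / 2
  have hx2 : x ^ 2 < D ^ 2 := by nlinarith
  have hkey : t * (x * |β| + x ^ 2 / 2) + |ρ| * x = (t / 2) * x ^ 2 + (t * |β| + |ρ|) * x := by
    ring
  rw [hkey, ← hphiD]
  have hc : 0 ≤ t * |β| + |ρ| := by positivity
  nlinarith [mul_lt_mul_of_pos_left hx2 (by linarith : (0:ℝ) < t / 2),
    mul_le_mul_of_nonneg_left hxD.le hc]

section W5
variable {ε γ₀ : ℝ} {ν : Measure ℝ}

lemma aux_K_nonneg (ν : Measure ℝ) (r : ℝ) : 0 ≤ ∫ x in Ioi (0:ℝ), x * Real.exp (r * x) ∂ν := by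
  apply integral_nonneg_of_ae
  filter_upwards [ae_restrict_mem measurableSet_Ioi] with x hx
  exact mul_nonneg (le_of_lt hx) (Real.exp_pos _).le

lemma aux_thetaL_hasDerivAt (hε : 0 < ε)
    (hmin : Integrable (fun x : ℝ => min x 1) ν)
    (hexp : ∀ r : ℝ, r < ε → IntegrableOn (fun x : ℝ => Real.exp (r * x)) {x | 1 < x} ν)
    {z : ℂ} (hz : z.re < ε) :
    HasDerivAt (thetaL γ₀ ν)
      ((γ₀:ℂ) + ∫ x in Ioi (0:ℝ), (x:ℂ) * Complex.exp (z * (x:ℂ)) ∂ν) z := by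
  have h1 : HasDerivAt (fun w : ℂ => (γ₀:ℂ) * w) (γ₀:ℂ) z := by
    simpa using (hasDerivAt_id z).const_mul (γ₀:ℂ)
  exact h1.add (aux_G_hasDerivAt hε hmin hexp hz)

lemma aux_norm_G1_le (hε : 0 < ε)
    (hmin : Integrable (fun x : ℝ => min x 1) ν)
    (hexp : ∀ r : ℝ, r < ε → IntegrableOn (fun x : ℝ => Real.exp (r * x)) {x | 1 < x} ν)
    {z : ℂ} {r : ℝ} (hzr : z.re ≤ r) (hr0 : 0 < r) (hrε : r < ε) :
    ‖∫ x in Ioi (0:ℝ), (x:ℂ) * Complex.exp (z * (x:ℂ)) ∂ν‖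
      ≤ ∫ x in Ioi (0:ℝ), x * Real.exp (r * x) ∂ν := by
  refine norm_integral_le_of_norm_le (aux_integrable_xexp hε hmin hexp hr0 hrε) ?_
  filter_upwards [ae_restrict_mem measurableSet_Ioi] with x hx
  exact aux_norm_xexp z hx hzr

lemma aux_norm_thetaL_le (hε : 0 < ε) (hγ₀ : 0 ≤ γ₀)
    (hmin : Integrable (fun x : ℝ => min x 1) ν)
    (hexp : ∀ r : ℝ, r < ε → IntegrableOn (fun x : ℝ => Real.exp (r * x)) {x | 1 < x} ν)
    {z : ℂ} {r : ℝ} (hzr : z.re ≤ r) (hr0 : 0 < r) (hrε : r < ε) :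
    ‖thetaL γ₀ ν z‖ ≤ (γ₀ + ∫ x in Ioi (0:ℝ), x * Real.exp (r * x) ∂ν) * ‖z‖ := by
  have hG : ‖∫ x in Ioi (0:ℝ), (Complex.exp (z * (x:ℂ)) - 1) ∂ν‖
      ≤ ‖z‖ * ∫ x in Ioi (0:ℝ), x * Real.exp (r * x) ∂ν := by
    rw [← integral_const_mul]
    refine norm_integral_le_of_norm_le ((aux_integrable_xexp hε hmin hexp hr0 hrε).const_mul ‖z‖) ?_
    filter_upwards [ae_restrict_mem measurableSet_Ioi] with x hx
    exact aux_norm_exp_sub_one z hx hzr hr0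
  calc ‖thetaL γ₀ ν z‖ ≤ ‖(γ₀:ℂ) * z‖ + ‖∫ x in Ioi (0:ℝ), (Complex.exp (z * (x:ℂ)) - 1) ∂ν‖ :=
        norm_add_le _ _
    _ ≤ γ₀ * ‖z‖ + ‖z‖ * ∫ x in Ioi (0:ℝ), x * Real.exp (r * x) ∂ν := by
        refine add_le_add ?_ hG
        rw [norm_mul, Complex.norm_real, Real.norm_eq_abs, abs_of_nonneg hγ₀]
    _ = (γ₀ + ∫ x in Ioi (0:ℝ), x * Real.exp (r * x) ∂ν) * ‖z‖ := by ring

lemma aux_phi_mono {t β ρ x y : ℝ} (ht : 0 < t) (hx : 0 ≤ x) (hxy : x ≤ y) :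
    t * (x * |β| + x ^ 2 / 2) + |ρ| * x ≤ t * (y * |β| + y ^ 2 / 2) + |ρ| * y := by
  nlinarith [mul_nonneg (mul_nonneg ht.le (sub_nonneg.2 hxy)) (abs_nonneg β),
    mul_nonneg (abs_nonneg ρ) (sub_nonneg.2 hxy),
    mul_nonneg ht.le (mul_nonneg (sub_nonneg.2 hxy) (by linarith : 0 ≤ y + x))]

end W5

section W6
variable {t ε β ρ γ₀ : ℝ} {ν : Measure ℝ}

lemma aux_cont_ufc (t β ρ : ℝ) (u : ℂ) :
    ContinuousOn (fun p : ℝ × ℝ => ufc t β ρ u p.1 p.2) ((Iio (0:ℝ)) ×ˢ (Ioc (0:ℝ) t)) := by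
  have hc : ContinuousOn (fun p : ℝ × ℝ => (Real.exp (p.1 * (t - p.2)) - 1) / p.1)
      ((Iio (0:ℝ)) ×ˢ (Ioc (0:ℝ) t)) := by
    apply ContinuousOn.div
    · exact (Continuous.sub (Real.continuous_exp.comp (by continuity)) continuous_const).continuousOn
    · exact continuous_fst.continuousOn
    · exact fun p hp => ne_of_lt hp.1
  exact ((Complex.continuous_ofReal.comp_continuousOn hc).mul continuousOn_const).add
    continuousOn_const

lemma aux_ufc_re_lt (ht : 0 < t) (hε : 0 < ε) {u : ℂ}
    (hu : |u.re| < -|β| - |ρ| / t + Real.sqrt ((|β| + |ρ| / t) ^ 2 + 2 * ε / t))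
    {A s : ℝ} (hA : A < 0) (hs : s ∈ Ioc (0:ℝ) t) : (ufc t β ρ u A s).re < ε :=
  lt_of_le_of_lt
    (by simpa [sq_abs] using aux_ufc_re ht hA (Ioc_subset_Icc_self hs) (u := u) (β := β) (ρ := ρ))
    (aux_phi_lt_eps ht hε (abs_nonneg u.re) hu)

lemma aux_meas_g (ht : 0 < t) (hε : 0 < ε)
    (hmin : Integrable (fun x : ℝ => min x 1) ν)
    (hexp : ∀ r : ℝ, r < ε → IntegrableOn (fun x : ℝ => Real.exp (r * x)) {x | 1 < x} ν)
    (π : Measure ℝ) {u : ℂ}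
    (hu : |u.re| < -|β| - |ρ| / t + Real.sqrt ((|β| + |ρ| / t) ^ 2 + 2 * ε / t)) :
    AEStronglyMeasurable (fun p : ℝ × ℝ => thetaL γ₀ ν (ufc t β ρ u p.1 p.2))
      ((π.prod volume).restrict ((Iio (0:ℝ)) ×ˢ (Ioc (0:ℝ) t))) := by
  refine ContinuousOn.aestronglyMeasurable ?_ (measurableSet_Iio.prod measurableSet_Ioc)
  refine ContinuousOn.comp (g := thetaL γ₀ ν) (t := {z : ℂ | z.re < ε})
    (fun z hz => (aux_thetaL_hasDerivAt hε hmin hexp hz).continuousAt.continuousWithinAt)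
    (aux_cont_ufc t β ρ u) ?_
  exact fun p hp => aux_ufc_re_lt ht hε hu hp.1 hp.2

lemma aux_meas_g' (ht : 0 < t) (hε : 0 < ε)
    (hmin : Integrable (fun x : ℝ => min x 1) ν)
    (hexp : ∀ r : ℝ, r < ε → IntegrableOn (fun x : ℝ => Real.exp (r * x)) {x | 1 < x} ν)
    (π : Measure ℝ) {u : ℂ}
    (hu : |u.re| < -|β| - |ρ| / t + Real.sqrt ((|β| + |ρ| / t) ^ 2 + 2 * ε / t)) :
    AEStronglyMeasurable (fun p : ℝ × ℝ =>
      ((γ₀:ℂ) + ∫ x in Ioi (0:ℝ), (x:ℂ) * Complex.exp (ufc t β ρ u p.1 p.2 * (x:ℂ)) ∂ν) *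
        ((((Real.exp (p.1 * (t - p.2)) - 1) / p.1 : ℝ) : ℂ) * ((β:ℂ) + u) + (ρ:ℂ)))
      ((π.prod volume).restrict ((Iio (0:ℝ)) ×ˢ (Ioc (0:ℝ) t))) := by
  refine ContinuousOn.aestronglyMeasurable ?_ (measurableSet_Iio.prod measurableSet_Ioc)
  have hG1 : ContinuousOn (fun z : ℂ => (γ₀:ℂ) + ∫ x in Ioi (0:ℝ), (x:ℂ) *
      Complex.exp (z * (x:ℂ)) ∂ν) {z : ℂ | z.re < ε} :=
    continuousOn_const.add
      (fun z hz => (aux_G1_hasDerivAt hε hmin hexp hz).continuousAt.continuousWithinAt)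
  have hc : ContinuousOn (fun p : ℝ × ℝ => (Real.exp (p.1 * (t - p.2)) - 1) / p.1)
      ((Iio (0:ℝ)) ×ˢ (Ioc (0:ℝ) t)) := by
    apply ContinuousOn.div
    · exact (Continuous.sub (Real.continuous_exp.comp (by continuity)) continuous_const).continuousOn
    · exact continuous_fst.continuousOn
    · exact fun p hp => ne_of_lt hp.1
  refine ContinuousOn.mul ?_
    (((Complex.continuous_ofReal.comp_continuousOn hc).mul continuousOn_const).add
      continuousOn_const)
  exact ContinuousOn.comp (g := fun z : ℂ => (γ₀:ℂ) + ∫ x in Ioi (0:ℝ), (x:ℂ) *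
      Complex.exp (z * (x:ℂ)) ∂ν) (f := fun p : ℝ × ℝ => ufc t β ρ u p.1 p.2)
    (t := {z : ℂ | z.re < ε}) hG1 (aux_cont_ufc t β ρ u)
    (fun p hp => aux_ufc_re_lt ht hε hu hp.1 hp.2)

lemma aux_finite (t : ℝ) (π : Measure ℝ) [IsProbabilityMeasure π] :
    IsFiniteMeasure ((π.prod volume).restrict ((Iio (0:ℝ)) ×ˢ (Ioc (0:ℝ) t))) := by
  refine ⟨?_⟩
  rw [Measure.restrict_apply_univ, Measure.prod_prod]
  exact ENNReal.mul_lt_top (measure_lt_top π _)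
    (by rw [Real.volume_Ioc]; exact ENNReal.ofReal_lt_top)

lemma aux_int_g (ht : 0 < t) (hε : 0 < ε) (hγ₀ : 0 ≤ γ₀)
    (hmin : Integrable (fun x : ℝ => min x 1) ν)
    (hexp : ∀ r : ℝ, r < ε → IntegrableOn (fun x : ℝ => Real.exp (r * x)) {x | 1 < x} ν)
    (π : Measure ℝ) [IsProbabilityMeasure π] {u : ℂ}
    (hu : |u.re| < -|β| - |ρ| / t + Real.sqrt ((|β| + |ρ| / t) ^ 2 + 2 * ε / t)) :
    Integrable (fun p : ℝ × ℝ => thetaL γ₀ ν (ufc t β ρ u p.1 p.2))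
      ((π.prod volume).restrict ((Iio (0:ℝ)) ×ˢ (Ioc (0:ℝ) t))) := by
  haveI := aux_finite t π
  obtain ⟨φ, hφ⟩ : ∃ φ : ℝ, φ = t * (|u.re| * |β| + u.re ^ 2 / 2) + |ρ| * |u.re| := ⟨_, rfl⟩
  have hφ0 : 0 ≤ φ := by rw [hφ]; positivity
  have hφε : φ < ε := by
    have h := aux_phi_lt_eps ht hε (abs_nonneg u.re) hu
    rw [sq_abs] at h
    rw [hφ]
    exact h
  obtain ⟨r, hφr, hr0, hrε⟩ : ∃ r : ℝ, φ ≤ r ∧ 0 < r ∧ r < ε :=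
    ⟨(φ + ε) / 2, by linarith, by linarith, by linarith⟩
  obtain ⟨K, hK⟩ : ∃ K : ℝ, K = ∫ x in Ioi (0:ℝ), x * Real.exp (r * x) ∂ν := ⟨_, rfl⟩
  have hK0 : 0 ≤ K := hK ▸ aux_K_nonneg ν r
  obtain ⟨R, hR⟩ : ∃ R : ℝ, R = t * ‖u * (β:ℂ) + u ^ 2 / 2‖ + |ρ| * ‖u‖ := ⟨_, rfl⟩
  have hR0 : 0 ≤ R := by rw [hR]; positivity
  refine Integrable.mono' (integrable_const ((γ₀ + K) * R)) (aux_meas_g ht hε hmin hexp π hu) ?_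
  filter_upwards [ae_restrict_mem (measurableSet_Iio.prod measurableSet_Ioc)] with p hp
  have hre := aux_ufc_re (β := β) (ρ := ρ) (u := u) ht hp.1 (Ioc_subset_Icc_self hp.2)
  have hzr : (ufc t β ρ u p.1 p.2).re ≤ r := le_trans hre (hφ ▸ hφr)
  calc ‖thetaL γ₀ ν (ufc t β ρ u p.1 p.2)‖ ≤ (γ₀ + K) * ‖ufc t β ρ u p.1 p.2‖ := by
        rw [hK]; exact aux_norm_thetaL_le hε hγ₀ hmin hexp hzr hr0 hrε
    _ ≤ (γ₀ + K) * R := by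
        rw [hR]
        exact mul_le_mul_of_nonneg_left
          (aux_ufc_norm ht hp.1 (Ioc_subset_Icc_self hp.2)) (by linarith)

end W6

section W7
variable {t ε β ρ γ₀ : ℝ} {ν : Measure ℝ}

lemma aux_ufc_hasDerivAt (t β ρ : ℝ) (A s : ℝ) (u : ℂ) :
    HasDerivAt (fun u : ℂ => ufc t β ρ u A s)
      ((((Real.exp (A * (t - s)) - 1) / A : ℝ) : ℂ) * ((β:ℂ) + u) + (ρ:ℂ)) u := by
  have ha : HasDerivAt (fun u : ℂ => u * (β:ℂ)) (β:ℂ) u := by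
    simpa using (hasDerivAt_id u).mul_const (β:ℂ)
  have hb : HasDerivAt (fun u : ℂ => u ^ 2 / 2) u u := by
    have h := (hasDerivAt_pow 2 u).div_const 2
    exact h.congr_deriv (by push_cast; ring)
  have h1 : HasDerivAt (fun u : ℂ => u * (β:ℂ) + u ^ 2 / 2) ((β:ℂ) + u) u := ha.add hb
  have h2 := (HasDerivAt.const_mul ((((Real.exp (A * (t - s)) - 1) / A : ℝ) : ℂ)) h1).add
    (HasDerivAt.const_mul ((ρ:ℂ)) (hasDerivAt_id u))
  simpa [ufc, Pi.add_def] using h2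

lemma aux_norm_ofReal_nonneg {c : ℝ} (hc : 0 ≤ c) : ‖((c:ℝ):ℂ)‖ = c := by
  rw [Complex.norm_real, Real.norm_eq_abs, abs_of_nonneg hc]

lemma aux_norm_quad {u : ℂ} {N : ℝ} (hN : ‖u‖ ≤ N) :
    ‖u * (β:ℂ) + u ^ 2 / 2‖ ≤ N * |β| + N ^ 2 / 2 := by
  have hN0 : 0 ≤ N := le_trans (norm_nonneg u) hN
  calc ‖u * (β:ℂ) + u ^ 2 / 2‖ ≤ ‖u * (β:ℂ)‖ + ‖u ^ 2 / 2‖ := norm_add_le _ _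
    _ = ‖u‖ * |β| + ‖u‖ ^ 2 / 2 := by
        rw [norm_mul, Complex.norm_real, Real.norm_eq_abs, norm_div, norm_pow]
        norm_num
    _ ≤ N * |β| + N ^ 2 / 2 := by
        have h1 : ‖u‖ ^ 2 ≤ N ^ 2 := by nlinarith [norm_nonneg u]
        have := mul_le_mul_of_nonneg_right hN (abs_nonneg β)
        linarith

lemma aux_master (ht : 0 < t) (hε : 0 < ε) (hγ₀ : 0 ≤ γ₀)
    (hmin : Integrable (fun x : ℝ => min x 1) ν)
    (hexp : ∀ r : ℝ, r < ε → IntegrableOn (fun x : ℝ => Real.exp (r * x)) {x | 1 < x} ν)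
    (π : Measure ℝ) [IsProbabilityMeasure π] {u₀ : ℂ}
    (hu₀ : |u₀.re| < -|β| - |ρ| / t + Real.sqrt ((|β| + |ρ| / t) ^ 2 + 2 * ε / t)) :
    ∃ D : ℂ, HasDerivAt (fun u : ℂ => ∫ p : ℝ × ℝ, thetaL γ₀ ν (ufc t β ρ u p.1 p.2)
        ∂((π.prod volume).restrict ((Iio (0:ℝ)) ×ˢ (Ioc (0:ℝ) t)))) D u₀ := by
  haveI := aux_finite t π
  obtain ⟨δ, hδ⟩ : ∃ d : ℝ, d = -|β| - |ρ| / t + Real.sqrt ((|β| + |ρ| / t) ^ 2 + 2 * ε / t) :=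
    ⟨_, rfl⟩
  rw [← hδ] at hu₀
  obtain ⟨η, hη⟩ : ∃ η : ℝ, η = (δ - |u₀.re|) / 2 := ⟨_, rfl⟩
  have hη0 : 0 < η := by rw [hη]; linarith
  obtain ⟨q, hq⟩ : ∃ q : ℝ, q = |u₀.re| + η := ⟨_, rfl⟩
  have hq0 : 0 ≤ q := by rw [hq]; positivity
  have hqδ : q < δ := by rw [hq, hη]; linarith [abs_nonneg u₀.re]
  have hball : ∀ u ∈ ball u₀ η, |u.re| ≤ q := by
    intro u hu
    have h1 : |u.re - u₀.re| ≤ ‖u - u₀‖ := by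
      simpa using Complex.abs_re_le_norm (u - u₀)
    have h2 : ‖u - u₀‖ < η := by simpa [Complex.dist_eq] using hu
    have h3 : |u.re| - |u₀.re| ≤ |u.re - u₀.re| := abs_sub_abs_le_abs_sub _ _
    rw [hq]; linarith
  obtain ⟨φq, hφq⟩ : ∃ φq : ℝ, φq = t * (q * |β| + q ^ 2 / 2) + |ρ| * q := ⟨_, rfl⟩
  have hφq0 : 0 ≤ φq := by
    rw [hφq]
    have h1 : 0 ≤ q * |β| + q ^ 2 / 2 := by positivity
    nlinarith [mul_nonneg ht.le h1, mul_nonneg (abs_nonneg ρ) hq0]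
  have hφqε : φq < ε := by
    have h := aux_phi_lt_eps ht hε hq0 (hδ ▸ hqδ)
    rw [hφq]; exact h
  obtain ⟨r, hφr, hr0, hrε⟩ : ∃ r : ℝ, φq ≤ r ∧ 0 < r ∧ r < ε :=
    ⟨(φq + ε) / 2, by linarith, by linarith, by linarith⟩
  obtain ⟨N, hN⟩ : ∃ N : ℝ, N = ‖u₀‖ + η := ⟨_, rfl⟩
  have hN0 : 0 ≤ N := by rw [hN]; positivity
  have huN : ∀ u ∈ ball u₀ η, ‖u‖ ≤ N := by
    intro u hu
    have : ‖u - u₀‖ < η := by simpa [dist_eq_norm] using hu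
    have h2 : ‖u‖ - ‖u₀‖ ≤ ‖u - u₀‖ := norm_sub_norm_le _ _
    rw [hN]; linarith
  obtain ⟨K, hK⟩ : ∃ K : ℝ, K = ∫ x in Ioi (0:ℝ), x * Real.exp (r * x) ∂ν := ⟨_, rfl⟩
  have hK0 : 0 ≤ K := hK ▸ aux_K_nonneg ν r
  -- re bound for u in ball
  have hre_ball : ∀ u ∈ ball u₀ η, ∀ p : ℝ × ℝ, p ∈ (Iio (0:ℝ)) ×ˢ (Ioc (0:ℝ) t) →
      (ufc t β ρ u p.1 p.2).re ≤ r := by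
    intro u hu p hp
    have h1 := aux_ufc_re (β := β) (ρ := ρ) (u := u) ht hp.1 (Ioc_subset_Icc_self hp.2)
    have h2 := aux_phi_mono (β := β) (ρ := ρ) ht (abs_nonneg u.re) (hball u hu)
    rw [sq_abs] at h2
    rw [← hφq] at h2
    have h2' : t * (|u.re| * |β| + u.re ^ 2 / 2) + |ρ| * |u.re| ≤ φq := by
      calc t * (|u.re| * |β| + u.re ^ 2 / 2) + |ρ| * |u.re|
          ≤ t * (q * |β| + q ^ 2 / 2) + |ρ| * q := by
            have := h2; rw [hφq] at this; exact this
        _ = φq := hφq.symm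
    linarith
  have hlt_δ : ∀ u ∈ ball u₀ η, |u.re| < -|β| - |ρ| / t +
      Real.sqrt ((|β| + |ρ| / t) ^ 2 + 2 * ε / t) :=
    fun u hu => hδ ▸ lt_of_le_of_lt (hball u hu) hqδ
  refine ⟨_, (hasDerivAt_integral_of_dominated_loc_of_deriv_le
    (F := fun u (p : ℝ × ℝ) => thetaL γ₀ ν (ufc t β ρ u p.1 p.2))
    (F' := fun u (p : ℝ × ℝ) =>
      ((γ₀:ℂ) + ∫ x in Ioi (0:ℝ), (x:ℂ) * Complex.exp (ufc t β ρ u p.1 p.2 * (x:ℂ)) ∂ν) *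
        ((((Real.exp (p.1 * (t - p.2)) - 1) / p.1 : ℝ) : ℂ) * ((β:ℂ) + u) + (ρ:ℂ)))
    (bound := fun _ => (γ₀ + K) * (t * (|β| + N) + |ρ|))
    (ball_mem_nhds u₀ hη0) ?_ ?_ ?_ ?_ ?_ ?_).2⟩
  · exact Filter.eventually_of_mem (ball_mem_nhds u₀ hη0)
      (fun u hu => aux_meas_g ht hε hmin hexp π (hlt_δ u hu))
  · exact aux_int_g ht hε hγ₀ hmin hexp π (hδ ▸ hu₀)
  · exact aux_meas_g' ht hε hmin hexp π (hδ ▸ hu₀)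
  · filter_upwards [ae_restrict_mem (measurableSet_Iio.prod measurableSet_Ioc)] with p hp
    intro u hu
    obtain ⟨hc0, hct⟩ := aux_c_mem ht hp.1 (Ioc_subset_Icc_self hp.2)
    rw [norm_mul]
    have hfac1 : ‖(γ₀:ℂ) + ∫ x in Ioi (0:ℝ), (x:ℂ) *
        Complex.exp (ufc t β ρ u p.1 p.2 * (x:ℂ)) ∂ν‖ ≤ γ₀ + K := by
      calc ‖(γ₀:ℂ) + ∫ x in Ioi (0:ℝ), (x:ℂ) * Complex.exp (ufc t β ρ u p.1 p.2 * (x:ℂ)) ∂ν‖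
          ≤ ‖(γ₀:ℂ)‖ + ‖∫ x in Ioi (0:ℝ), (x:ℂ) *
            Complex.exp (ufc t β ρ u p.1 p.2 * (x:ℂ)) ∂ν‖ := norm_add_le _ _
        _ ≤ γ₀ + K := by
            rw [aux_norm_ofReal_nonneg hγ₀, hK]
            exact add_le_add le_rfl
              (aux_norm_G1_le hε hmin hexp (hre_ball u hu p hp) hr0 hrε)
    have hfac2 : ‖(((Real.exp (p.1 * (t - p.2)) - 1) / p.1 : ℝ) : ℂ) * ((β:ℂ) + u) + (ρ:ℂ)‖
        ≤ t * (|β| + N) + |ρ| := by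
      calc ‖(((Real.exp (p.1 * (t - p.2)) - 1) / p.1 : ℝ) : ℂ) * ((β:ℂ) + u) + (ρ:ℂ)‖
          ≤ ‖(((Real.exp (p.1 * (t - p.2)) - 1) / p.1 : ℝ) : ℂ)‖ * ‖(β:ℂ) + u‖ + ‖(ρ:ℂ)‖ := by
            refine le_trans (norm_add_le _ _) ?_
            rw [norm_mul]
        _ ≤ t * (|β| + N) + |ρ| := by
            rw [aux_norm_ofReal_nonneg hc0, Complex.norm_real, Real.norm_eq_abs]
            refine add_le_add ?_ le_rfl
            have hbu : ‖(β:ℂ) + u‖ ≤ |β| + N := by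
              calc ‖(β:ℂ) + u‖ ≤ ‖(β:ℂ)‖ + ‖u‖ := norm_add_le _ _
                _ ≤ |β| + N := by
                    rw [Complex.norm_real, Real.norm_eq_abs]
                    exact add_le_add le_rfl (huN u hu)
            calc (Real.exp (p.1 * (t - p.2)) - 1) / p.1 * ‖(β:ℂ) + u‖
                ≤ t * ‖(β:ℂ) + u‖ := mul_le_mul_of_nonneg_right hct (norm_nonneg _)
              _ ≤ t * (|β| + N) := mul_le_mul_of_nonneg_left hbu ht.le
    calc ‖(γ₀:ℂ) + ∫ x in Ioi (0:ℝ), (x:ℂ) * Complex.exp (ufc t β ρ u p.1 p.2 * (x:ℂ)) ∂ν‖ *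
        ‖(((Real.exp (p.1 * (t - p.2)) - 1) / p.1 : ℝ) : ℂ) * ((β:ℂ) + u) + (ρ:ℂ)‖
        ≤ (γ₀ + K) * ‖(((Real.exp (p.1 * (t - p.2)) - 1) / p.1 : ℝ) : ℂ) * ((β:ℂ) + u) + (ρ:ℂ)‖ :=
          mul_le_mul_of_nonneg_right hfac1 (norm_nonneg _)
      _ ≤ (γ₀ + K) * (t * (|β| + N) + |ρ|) :=
          mul_le_mul_of_nonneg_left hfac2 (by linarith)
  · exact integrable_const _
  · filter_upwards [ae_restrict_mem (measurableSet_Iio.prod measurableSet_Ioc)] with p hp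
    intro u hu
    have hzlt : (ufc t β ρ u p.1 p.2).re < ε := lt_of_le_of_lt (hre_ball u hu p hp) hrε
    have hcomp := HasDerivAt.comp u (aux_thetaL_hasDerivAt (γ₀ := γ₀) hε hmin hexp hzlt)
      (aux_ufc_hasDerivAt t β ρ p.1 p.2 u)
    simpa [Function.comp_def] using hcomp
end W7


end AuxStmt9

open Set Metric in
theorem stmt_9 (t ε β ρ γ₀ : ℝ) (ht : 0 < t) (hε : 0 < ε) (hγ₀ : 0 ≤ γ₀)
    (ν : Measure ℝ) (hν : ν (Set.Ioi (0 : ℝ))ᶜ = 0)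
    (hmin : Integrable (fun x : ℝ => min x 1) ν)
    (hexp : ∀ r : ℝ, r < ε → IntegrableOn (fun x : ℝ => Real.exp (r * x)) {x | 1 < x} ν)
    (π : Measure ℝ) [IsProbabilityMeasure π] (hπ : π (Set.Iio (0 : ℝ))ᶜ = 0) :
    (∀ u : ℂ, |u.re| < -|β| - |ρ| / t + Real.sqrt ((|β| + |ρ| / t) ^ 2 + 2 * ε / t) →
      IntegrableOn (fun A : ℝ => ∫ s in (0 : ℝ)..t, thetaL γ₀ ν (ufc t β ρ u A s))
        (Set.Iio 0) π) ∧
    DifferentiableOn ℂ (Theta t β ρ γ₀ ν π)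
      {u : ℂ | |u.re| < -|β| - |ρ| / t + Real.sqrt ((|β| + |ρ| / t) ^ 2 + 2 * ε / t)} := by
  constructor
  · intro u hu
    have hint : Integrable (Function.uncurry fun A s => thetaL γ₀ ν (ufc t β ρ u A s))
        ((π.restrict (Iio 0)).prod (volume.restrict (Ioc 0 t))) := by
      rw [Measure.prod_restrict]
      exact aux_int_g ht hε hγ₀ hmin hexp π hu
    have h2 := hint.integral_prod_left
    have heq : (fun A : ℝ => ∫ s in (0:ℝ)..t, thetaL γ₀ ν (ufc t β ρ u A s)) =
        fun A : ℝ => ∫ s in Ioc (0:ℝ) t, thetaL γ₀ ν (ufc t β ρ u A s) := by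
      funext A; exact intervalIntegral.integral_of_le ht.le
    rw [IntegrableOn, heq]
    exact h2
  · intro u₀ hu₀
    simp only [Set.mem_setOf_eq] at hu₀
    obtain ⟨D, hD⟩ := aux_master ht hε hγ₀ hmin hexp π hu₀
    have hopen : IsOpen {u : ℂ | |u.re| <
        -|β| - |ρ| / t + Real.sqrt ((|β| + |ρ| / t) ^ 2 + 2 * ε / t)} :=
      isOpen_lt Complex.continuous_re.abs continuous_const
    have heq : ∀ u ∈ {u : ℂ | |u.re| <
        -|β| - |ρ| / t + Real.sqrt ((|β| + |ρ| / t) ^ 2 + 2 * ε / t)},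
        Theta t β ρ γ₀ ν π u = ∫ p : ℝ × ℝ, thetaL γ₀ ν (ufc t β ρ u p.1 p.2)
          ∂((π.prod volume).restrict ((Iio (0:ℝ)) ×ˢ (Ioc (0:ℝ) t))) := by
      intro u hu
      simp only [Set.mem_setOf_eq] at hu
      have hint : Integrable (Function.uncurry fun A s => thetaL γ₀ ν (ufc t β ρ u A s))
          ((π.restrict (Iio 0)).prod (volume.restrict (Ioc 0 t))) := by
        rw [Measure.prod_restrict]
        exact aux_int_g ht hε hγ₀ hmin hexp π hu
      have h3 := MeasureTheory.integral_integral hint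
      unfold Theta
      simp_rw [intervalIntegral.integral_of_le ht.le]
      rw [h3, Measure.prod_restrict]
    have hmem : {u : ℂ | |u.re| <
        -|β| - |ρ| / t + Real.sqrt ((|β| + |ρ| / t) ^ 2 + 2 * ε / t)} ∈ nhds u₀ :=
      hopen.mem_nhds hu₀
    have hev : Theta t β ρ γ₀ ν π =ᶠ[nhds u₀]
        (fun u => ∫ p : ℝ × ℝ, thetaL γ₀ ν (ufc t β ρ u p.1 p.2)
          ∂((π.prod volume).restrict ((Iio (0:ℝ)) ×ˢ (Ioc (0:ℝ) t)))) :=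
      Filter.eventuallyEq_of_mem hmem heq
    exact ((hD.congr_of_eventuallyEq hev).differentiableAt).differentiableWithinAt
end

section
/- Fix t > 0, ε > 0, β, ρ ∈ ℝ, let δ = -|β| - |ρ|/t + √((|β| + |ρ|/t)² + 2ε/t), let γ₀ ≥ 0, let ν be a Borel measure on ℝ concentrated on (0,∞) with ∫ min(x,1) ν(dx) < ∞ and ∫_{x>1} e^{rx} ν(dx) < ∞ for all r < ε, and let π be a Borel probability measure on ℝ concentrated on (-∞,0). Let Θ(u) = ∫_{(-∞,0)} ∫₀ᵗ θ_L(u·f_u(A,s)) ds π(dA). Then for every real constant c, every real z > 0 and every v ∈ ℝ with |v| < δ, the function w ↦ exp((v + iw)c + ((v + iw)β + (v + iw)²/2)·z + Θ(v + iw)) is Lebesgue integrable on ℝ (i.e., the map w ↦ Φ(v + iw) with Φ(u) = exp(uc + (uβ + u²/2)z + Θ(u)) is absolutely integrable over w ∈ ℝ). -/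
open MeasureTheory

/-- A measure on `ℝ` concentrated on `(0,∞)` with `∫ min(x,1) ν(dx) < ∞` is σ-finite. -/
lemma nu_sf (ν : Measure ℝ) (hν : ν (Set.Ioi (0:ℝ))ᶜ = 0)
    (hmin : Integrable (fun x : ℝ => min x 1) ν) : SigmaFinite ν := by
  refine ⟨⟨⟨fun n => Set.Ioi (((n:ℝ)+1)⁻¹) ∪ (Set.Ioi (0:ℝ))ᶜ, fun _ => trivial, fun n => ?_, ?_⟩⟩⟩
  · have hp1 : (0:ℝ) < ((n:ℝ)+1)⁻¹ := by positivity
    have hp : (0:ℝ) < min (((n:ℝ)+1)⁻¹) 1 := lt_min hp1 one_pos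
    have h2 := hmin.measure_ge_lt_top hp
    have h1 : ν (Set.Ioi (((n:ℝ)+1)⁻¹)) < ⊤ := by
      refine lt_of_le_of_lt (measure_mono ?_) h2
      intro x hx
      exact min_le_min (le_of_lt (Set.mem_Ioi.mp hx)) le_rfl
    calc ν _ ≤ ν (Set.Ioi (((n:ℝ)+1)⁻¹)) + ν (Set.Ioi (0:ℝ))ᶜ := measure_union_le _ _
      _ < ⊤ := by rw [hν]; simpa using h1
  · ext x
    simp only [Set.mem_iUnion, Set.mem_union, Set.mem_Ioi, Set.mem_compl_iff, Set.mem_univ,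
      iff_true]
    rcases le_or_gt x 0 with h | h
    · exact ⟨0, Or.inr (by simpa using h)⟩
    · obtain ⟨n, hn⟩ := exists_nat_one_div_lt h
      exact ⟨n, Or.inl (by rw [inv_eq_one_div]; exact hn)⟩

lemma nu_finite_Ioi_one (ν : Measure ℝ)
    (hmin : Integrable (fun x : ℝ => min x 1) ν) : ν (Set.Ioi (1:ℝ)) < ⊤ := by
  refine lt_of_le_of_lt (measure_mono ?_) (hmin.measure_ge_lt_top one_pos)
  intro x hx
  simp only [Set.mem_setOf_eq, le_min_iff]
  exact ⟨le_of_lt hx, le_rfl⟩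

lemma boundIntegrable (ν : Measure ℝ) {ε : ℝ}
    (hmin : Integrable (fun x : ℝ => min x 1) ν)
    (hexp : ∀ r : ℝ, r < ε → IntegrableOn (fun x : ℝ => Real.exp (r * x)) {x | 1 < x} ν)
    {M : ℝ} (hM0 : 0 ≤ M) (hMε : M < ε) :
    IntegrableOn (fun x : ℝ => Real.exp (M*x) - 1) (Set.Ioi 0) ν := by
  have hsplit : Set.Ioi (0:ℝ) = Set.Ioc 0 1 ∪ Set.Ioi 1 :=
    (Set.Ioc_union_Ioi_eq_Ioi (by norm_num)).symm
  rw [hsplit]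
  refine IntegrableOn.union ?_ ?_
  · refine Integrable.mono' ((hmin.const_mul (M * Real.exp M)).integrableOn)
      (((Real.continuous_exp.comp (continuous_const.mul continuous_id)).sub
        continuous_const).aestronglyMeasurable) ?_
    rw [ae_restrict_iff' measurableSet_Ioc]
    refine ae_of_all _ fun x hx => ?_
    have hx0 : 0 < x := hx.1
    have hx1 : x ≤ 1 := hx.2
    have hMx : 0 ≤ M * x := by positivity
    have key : (1 - M*x) * Real.exp (M*x) ≤ 1 := by
      have h1 := Real.add_one_le_exp (-(M*x))
      have h2 : Real.exp (-(M*x)) * Real.exp (M*x) = 1 := by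
        rw [← Real.exp_add]; simp
      nlinarith [Real.exp_pos (M*x)]
    have hemono : Real.exp (M*x) ≤ Real.exp M := Real.exp_le_exp.2 (by nlinarith)
    have habs : |Real.exp (M*x) - 1| = Real.exp (M*x) - 1 := by
      rw [abs_of_nonneg]; linarith [Real.one_le_exp hMx]
    have hminx : min x 1 = x := min_eq_left hx1
    simp only [Real.norm_eq_abs, habs, hminx]
    nlinarith [Real.exp_pos (M*x), Real.exp_pos M]
  · have h1 : Set.Ioi (1:ℝ) = {x | 1 < x} := rfl
    have h2 := hexp M hMε
    rw [h1]
    have hconst : IntegrableOn (fun _ : ℝ => (1:ℝ)) {x | 1 < x} ν := by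
      refine integrableOn_const ?_
      exact ne_of_lt (by rw [← h1]; exact nu_finite_Ioi_one ν hmin)
    exact h2.sub hconst

lemma re_thetaL_le (γ₀ : ℝ) (hγ₀ : 0 ≤ γ₀) (ν : Measure ℝ) {M : ℝ} (hM0 : 0 ≤ M)
    (hint : IntegrableOn (fun x : ℝ => Real.exp (M*x) - 1) (Set.Ioi 0) ν)
    {ζ : ℂ} (hζ : ζ.re ≤ M) :
    (thetaL γ₀ ν ζ).re ≤ γ₀ * M + ∫ x in Set.Ioi (0:ℝ), (Real.exp (M*x) - 1) ∂ν := by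
  unfold thetaL
  rw [Complex.add_re]
  have h1 : ((γ₀:ℂ) * ζ).re = γ₀ * ζ.re := by
    simp [Complex.mul_re]
  refine add_le_add (by rw [h1]; nlinarith) ?_
  by_cases h : IntegrableOn (fun x : ℝ => Complex.exp (ζ * x) - 1) (Set.Ioi 0) ν
  · rw [← RCLike.re_to_complex, ← integral_re h]
    refine setIntegral_mono_on h.re hint measurableSet_Ioi fun x hx => ?_
    have hre : (Complex.exp (ζ * x) - 1).re = Real.exp (ζ.re * x) * Real.cos (ζ.im * x) - 1 := by
      simp [Complex.sub_re, Complex.exp_re, Complex.mul_re, Complex.mul_im]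
    rw [show RCLike.re (Complex.exp (ζ * x) - 1) = (Complex.exp (ζ * x) - 1).re from rfl, hre]
    have hmono : Real.exp (ζ.re * x) ≤ Real.exp (M * x) :=
      Real.exp_le_exp.2 (mul_le_mul_of_nonneg_right hζ (le_of_lt hx))
    nlinarith [Real.cos_le_one (ζ.im * x), Real.exp_pos (ζ.re * x)]
  · rw [integral_undef h]
    simp only [Complex.zero_re]
    refine setIntegral_nonneg measurableSet_Ioi fun x hx => ?_
    have : (1:ℝ) ≤ Real.exp (M*x) := Real.one_le_exp (mul_nonneg hM0 (le_of_lt hx))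
    linarith

lemma re_aux (g ρ v w β : ℝ) :
    ((g:ℂ) * (((v:ℂ)+(w:ℂ)*Complex.I) * (β:ℂ) + ((v:ℂ)+(w:ℂ)*Complex.I)^2/2)
      + (ρ:ℂ)*((v:ℂ)+(w:ℂ)*Complex.I)).re = g*(v*β + (v^2-w^2)/2) + ρ*v := by
  simp only [Complex.add_re, Complex.mul_re, Complex.mul_im, Complex.add_im,
    Complex.ofReal_re, Complex.ofReal_im, Complex.I_re, Complex.I_im, pow_two,
    Complex.div_re, Complex.normSq_apply, Complex.re_ofNat, Complex.im_ofNat]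
  ring

lemma re_aux2 (v w c β z : ℝ) (T : ℂ) :
    (((v:ℂ)+(w:ℂ)*Complex.I) * (c:ℂ) + (((v:ℂ)+(w:ℂ)*Complex.I) * (β:ℂ)
      + ((v:ℂ)+(w:ℂ)*Complex.I)^2/2) * (z:ℂ) + T).re
    = v*c + (v*β + (v^2-w^2)/2)*z + T.re := by
  simp only [Complex.add_re, Complex.mul_re, Complex.mul_im, Complex.add_im,
    Complex.ofReal_re, Complex.ofReal_im, Complex.I_re, Complex.I_im, pow_two,
    Complex.div_re, Complex.normSq_apply, Complex.re_ofNat, Complex.im_ofNat]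
  ring

lemma re_ufc_le {t β ρ v w : ℝ} (ht : 0 < t) {A s : ℝ} (hA : A < 0) (hs : s ∈ Set.Ioc 0 t) :
    (ufc t β ρ ((v:ℂ) + (w:ℂ)*Complex.I) A s).re ≤ t*(|v| * |β| + v^2/2) + |ρ| * |v| := by
  set g : ℝ := (Real.exp (A * (t - s)) - 1) / A with hgdef
  have hτ0 : 0 ≤ t - s := by linarith [hs.2]
  have hg0 : 0 ≤ g := by
    rw [hgdef]
    apply div_nonneg_of_nonpos _ hA.le
    have : A * (t - s) ≤ 0 := mul_nonpos_of_nonpos_of_nonneg hA.le hτ0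
    linarith [Real.exp_le_one_iff.2 this]
  have hgt : g ≤ t := by
    have h1 : A * (t-s) + 1 ≤ Real.exp (A * (t-s)) := Real.add_one_le_exp _
    have h2 : g ≤ t - s := by
      rw [hgdef, div_le_iff_of_neg hA]
      nlinarith
    linarith [hs.1.le]
  have hre : (ufc t β ρ ((v:ℂ) + (w:ℂ)*Complex.I) A s).re
      = g * (v*β + (v^2 - w^2)/2) + ρ*v := re_aux g ρ v w β
  rw [hre]
  have h1 : v*β + (v^2 - w^2)/2 ≤ |v| * |β| + v^2/2 := by
    nlinarith [le_abs_self (v*β), abs_mul v β, sq_nonneg w]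
  have h2 : ρ*v ≤ |ρ| * |v| := by
    calc ρ*v ≤ |ρ*v| := le_abs_self _
      _ = |ρ| * |v| := abs_mul _ _
  have h3 : g * (v*β + (v^2 - w^2)/2) ≤ t*(|v| * |β| + v^2/2) := by
    rcases le_or_gt (v*β + (v^2 - w^2)/2) 0 with hc | hc
    · have hle : g * (v*β + (v^2 - w^2)/2) ≤ 0 := mul_nonpos_of_nonneg_of_nonpos hg0 hc
      have : (0:ℝ) ≤ t*(|v| * |β| + v^2/2) := mul_nonneg ht.le (by positivity)
      linarith
    · calc g * (v*β + (v^2 - w^2)/2) ≤ t * (v*β + (v^2 - w^2)/2) :=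
            mul_le_mul_of_nonneg_right hgt hc.le
        _ ≤ t*(|v| * |β| + v^2/2) := mul_le_mul_of_nonneg_left h1 ht.le
  linarith

lemma re_Theta_le (t β ρ γ₀ : ℝ) (ht : 0 < t) (ν π : Measure ℝ) [IsProbabilityMeasure π]
    (hπ : π (Set.Iio (0 : ℝ))ᶜ = 0) (u : ℂ) {Cθ : ℝ} (hCθ : 0 ≤ Cθ)
    (hbound : ∀ A < (0:ℝ), ∀ s ∈ Set.Ioc (0:ℝ) t, (thetaL γ₀ ν (ufc t β ρ u A s)).re ≤ Cθ) :
    (Theta t β ρ γ₀ ν π u).re ≤ t * Cθ := by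
  have htC : 0 ≤ t * Cθ := mul_nonneg ht.le hCθ
  have step : ∀ A < (0:ℝ), (∫ s in (0:ℝ)..t, thetaL γ₀ ν (ufc t β ρ u A s)).re ≤ t * Cθ := by
    intro A hA
    rw [intervalIntegral.integral_of_le ht.le]
    by_cases hh : IntegrableOn (fun s => thetaL γ₀ ν (ufc t β ρ u A s)) (Set.Ioc 0 t) volume
    · rw [← RCLike.re_to_complex, ← integral_re hh]
      calc (∫ s in Set.Ioc (0:ℝ) t, RCLike.re (thetaL γ₀ ν (ufc t β ρ u A s)))
          ≤ ∫ _ in Set.Ioc (0:ℝ) t, Cθ := by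
            refine setIntegral_mono_on hh.re ?_ measurableSet_Ioc fun s hs => hbound A hA s hs
            exact integrableOn_const measure_Ioc_lt_top.ne
        _ = (volume (Set.Ioc (0:ℝ) t)).toReal * Cθ := by rw [setIntegral_const]; rw [smul_eq_mul]; rfl
        _ = t * Cθ := by rw [Real.volume_Ioc, sub_zero, ENNReal.toReal_ofReal ht.le]
    · rw [integral_undef hh]
      simpa using htC
  unfold Theta
  by_cases hF : IntegrableOn
      (fun A => ∫ s in (0:ℝ)..t, thetaL γ₀ ν (ufc t β ρ u A s)) (Set.Iio 0) π
  · rw [← RCLike.re_to_complex, ← integral_re hF]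
    calc (∫ A in Set.Iio (0:ℝ), RCLike.re (∫ s in (0:ℝ)..t, thetaL γ₀ ν (ufc t β ρ u A s)) ∂π)
        ≤ ∫ _ in Set.Iio (0:ℝ), t * Cθ ∂π := by
          refine setIntegral_mono_on hF.re ?_ measurableSet_Iio fun A hA => step A hA
          exact integrableOn_const (measure_lt_top _ _).ne
      _ = (π (Set.Iio (0:ℝ))).toReal * (t * Cθ) := by rw [setIntegral_const]; rw [smul_eq_mul]; rfl
      _ = t * Cθ := by
          rw [(prob_compl_eq_zero_iff measurableSet_Iio).1 hπ]
          simp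
  · rw [integral_undef hF]
    simpa using htC

lemma thetaL_sm (γ₀ : ℝ) (ν : Measure ℝ) [SigmaFinite ν] :
    StronglyMeasurable (thetaL γ₀ ν) := by
  unfold thetaL
  apply StronglyMeasurable.add
  · exact (continuous_const.mul continuous_id).stronglyMeasurable
  · have hc : StronglyMeasurable (fun p : ℂ × ℝ => Complex.exp (p.1 * (p.2:ℂ)) - 1) := by
      apply Continuous.stronglyMeasurable
      exact (Complex.continuous_exp.comp (continuous_fst.mul
        (Complex.continuous_ofReal.comp continuous_snd))).sub continuous_const
    exact hc.integral_prod_right'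

lemma Theta_sm (t β ρ γ₀ : ℝ) (ht : 0 < t) (ν π : Measure ℝ) [SigmaFinite ν]
    [IsFiniteMeasure π] : StronglyMeasurable (Theta t β ρ γ₀ ν π) := by
  have hufc : Measurable (fun p : (ℂ × ℝ) × ℝ => ufc t β ρ p.1.1 p.1.2 p.2) := by
    unfold ufc
    fun_prop
  have h1 : StronglyMeasurable (fun p : (ℂ × ℝ) × ℝ => thetaL γ₀ ν (ufc t β ρ p.1.1 p.1.2 p.2)) :=
    (thetaL_sm γ₀ ν).comp_measurable hufc
  have h2 : StronglyMeasurable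
      (fun p : ℂ × ℝ => ∫ s in (0:ℝ)..t, thetaL γ₀ ν (ufc t β ρ p.1 p.2 s)) := by
    have heq : (fun p : ℂ × ℝ => ∫ s in (0:ℝ)..t, thetaL γ₀ ν (ufc t β ρ p.1 p.2 s))
        = fun p : ℂ × ℝ => ∫ s in Set.Ioc (0:ℝ) t, thetaL γ₀ ν (ufc t β ρ p.1 p.2 s) :=
      funext fun p => intervalIntegral.integral_of_le ht.le
    rw [heq]
    exact h1.integral_prod_right'
  unfold Theta
  exact h2.integral_prod_right'

theorem stmt_12 (t ε β ρ γ₀ : ℝ) (ht : 0 < t) (hε : 0 < ε) (hγ₀ : 0 ≤ γ₀)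
    (ν : Measure ℝ) (hν : ν (Set.Ioi (0 : ℝ))ᶜ = 0)
    (hmin : Integrable (fun x : ℝ => min x 1) ν)
    (hexp : ∀ r : ℝ, r < ε → IntegrableOn (fun x : ℝ => Real.exp (r * x)) {x | 1 < x} ν)
    (π : Measure ℝ) [IsProbabilityMeasure π] (hπ : π (Set.Iio (0 : ℝ))ᶜ = 0) :
    ∀ (c : ℝ) (z : ℝ), 0 < z →
      ∀ v : ℝ, |v| < -|β| - |ρ| / t + Real.sqrt ((|β| + |ρ| / t) ^ 2 + 2 * ε / t) →
        Integrable
          (fun w : ℝ =>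
            Complex.exp (((v : ℂ) + (w : ℂ) * Complex.I) * (c : ℂ) +
              (((v : ℂ) + (w : ℂ) * Complex.I) * (β : ℂ) +
                  ((v : ℂ) + (w : ℂ) * Complex.I) ^ 2 / 2) * (z : ℂ) +
              Theta t β ρ γ₀ ν π ((v : ℂ) + (w : ℂ) * Complex.I)))
          volume := by
  intro c z hz v hv
  have hsf : SigmaFinite ν := nu_sf ν hν hmin
  set a : ℝ := |β| + |ρ|/t with hadef
  have ha0 : 0 ≤ a := add_nonneg (abs_nonneg _) (div_nonneg (abs_nonneg _) ht.le)
  have hMε : t*(v^2/2 + a*|v|) < ε := by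
    have h1 : |v| + a < Real.sqrt (a^2 + 2*ε/t) := by rw [hadef]; linarith [hv]
    have h2 := (Real.lt_sqrt (add_nonneg (abs_nonneg v) ha0)).1 h1
    have h3 : v^2 + 2*a*|v| < 2*ε/t := by nlinarith [sq_abs v]
    have h4 := mul_lt_mul_of_pos_left h3 (half_pos ht)
    have h5 : (t/2)*(2*ε/t) = ε := by field_simp
    nlinarith
  set M : ℝ := t*(v^2/2 + a*|v|) with hMdef
  have hM0 : 0 ≤ M :=
    mul_nonneg ht.le (add_nonneg (by positivity) (mul_nonneg ha0 (abs_nonneg v)))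
  have hintM := boundIntegrable ν hmin hexp hM0 hMε
  set Cθ : ℝ := γ₀ * M + ∫ x in Set.Ioi (0:ℝ), (Real.exp (M*x) - 1) ∂ν with hCdef
  have hCθ : 0 ≤ Cθ := add_nonneg (mul_nonneg hγ₀ hM0)
    (setIntegral_nonneg measurableSet_Ioi fun x hx => by
      linarith [Real.one_le_exp (mul_nonneg hM0 (le_of_lt hx))])
  have hMeq : t*(|v| * |β| + v^2/2) + |ρ| * |v| = M := by
    rw [hMdef, hadef]
    field_simp
    ring
  have hbound : ∀ w : ℝ, ∀ A < (0:ℝ), ∀ s ∈ Set.Ioc (0:ℝ) t,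
      (thetaL γ₀ ν (ufc t β ρ ((v:ℂ)+(w:ℂ)*Complex.I) A s)).re ≤ Cθ := by
    intro w A hA s hs
    rw [hCdef]
    refine re_thetaL_le γ₀ hγ₀ ν hM0 hintM ?_
    refine le_trans (re_ufc_le ht hA hs) ?_
    rw [hMeq]
  have hTheta : ∀ w : ℝ, (Theta t β ρ γ₀ ν π ((v:ℂ)+(w:ℂ)*Complex.I)).re ≤ t * Cθ :=
    fun w => re_Theta_le t β ρ γ₀ ht ν π hπ _ hCθ (hbound w)
  have hTm : StronglyMeasurable (Theta t β ρ γ₀ ν π) := Theta_sm t β ρ γ₀ ht ν π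
  have hsm : AEStronglyMeasurable
      (fun w : ℝ =>
        Complex.exp (((v : ℂ) + (w : ℂ) * Complex.I) * (c : ℂ) +
          (((v : ℂ) + (w : ℂ) * Complex.I) * (β : ℂ) +
              ((v : ℂ) + (w : ℂ) * Complex.I) ^ 2 / 2) * (z : ℂ) +
          Theta t β ρ γ₀ ν π ((v : ℂ) + (w : ℂ) * Complex.I))) volume := by
    have hin : StronglyMeasurable
        (fun w : ℝ =>
          ((v : ℂ) + (w : ℂ) * Complex.I) * (c : ℂ) +
          (((v : ℂ) + (w : ℂ) * Complex.I) * (β : ℂ) +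
              ((v : ℂ) + (w : ℂ) * Complex.I) ^ 2 / 2) * (z : ℂ) +
          Theta t β ρ γ₀ ν π ((v : ℂ) + (w : ℂ) * Complex.I)) := by
      apply StronglyMeasurable.add
      · apply Continuous.stronglyMeasurable
        fun_prop
      · exact hTm.comp_measurable (by fun_prop)
    exact (Complex.continuous_exp.comp_stronglyMeasurable hin).aestronglyMeasurable
  refine Integrable.mono'
    (g := fun w : ℝ => Real.exp (v*c + (v*β + v^2/2)*z + t*Cθ) * Real.exp (-(z/2)*w^2))
    ((integrable_exp_neg_mul_sq (half_pos hz)).const_mul _) hsm (ae_of_all _ fun w => ?_)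
  rw [Complex.norm_exp, ← Real.exp_add]
  apply Real.exp_le_exp.2
  rw [re_aux2 v w c β z]
  have hT := hTheta w
  have hid : (v*β + (v^2-w^2)/2)*z = (v*β + v^2/2)*z + (-(z/2)*w^2) := by ring
  rw [hid]
  clear_value Cθ M a
  linarith [hT]
end

section
/- Let ν be a Borel measure on ℝ concentrated on (0,∞) with ∫ min(x,1) ν(dx) < ∞ and ∫_{x>1} ln(x) ν(dx) < ∞, and let π be a Borel probability measure on ℝ concentrated on (-∞,0) with ∫_{(-∞,0)} (1/(-A)) π(dA) < ∞. Then the iterated integral ∫_{(-∞,0)} ∫₀^∞ ∫_{(0,∞)} min(e^{As}·x, 1) ν(dx) ds π(dA) is finite. (This says that the measure ν_Σ defined by ν_Σ(B) = ∫_{(-∞,0)} ∫₀^∞ ∫_{(0,∞)} 1_B(e^{As}x) ν(dx) ds π(dA) satisfies the Lévy-measure integrability condition ∫ min(y,1) ν_Σ(dy) < ∞.) -/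
open MeasureTheory

open Set Real in
private lemma inner_bound_13 {A x : ℝ} (hA : A < 0) (hx : 0 < x) :
    ∫⁻ s in Ioi (0:ℝ), ENNReal.ofReal (min (Real.exp (A * s) * x) 1)
      ≤ ENNReal.ofReal (-A)⁻¹ * ENNReal.ofReal (max (Real.log x) 0 + min x 1) := by
  set c : ℝ := -A with hc
  have hcpos : 0 < c := by simp [hc]; linarith
  set s1 : ℝ := max (Real.log x) 0 / c with hs1
  have hs1nn : 0 ≤ s1 := div_nonneg (le_max_right _ _) hcpos.le
  have hunion : Ioc (0:ℝ) s1 ∪ Ioi s1 = Ioi 0 := Ioc_union_Ioi_eq_Ioi hs1nn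
  calc ∫⁻ s in Ioi (0:ℝ), ENNReal.ofReal (min (Real.exp (A * s) * x) 1)
      = ∫⁻ s in Ioc (0:ℝ) s1 ∪ Ioi s1, ENNReal.ofReal (min (Real.exp (A * s) * x) 1) := by
        rw [hunion]
    _ ≤ (∫⁻ s in Ioc (0:ℝ) s1, ENNReal.ofReal (min (Real.exp (A * s) * x) 1))
        + ∫⁻ s in Ioi s1, ENNReal.ofReal (min (Real.exp (A * s) * x) 1) :=
        lintegral_union_le _ _ _
    _ ≤ ENNReal.ofReal s1 + ENNReal.ofReal (min x 1 / c) := by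
        gcongr
        · calc (∫⁻ s in Ioc (0:ℝ) s1, ENNReal.ofReal (min (Real.exp (A * s) * x) 1))
              ≤ ∫⁻ _ in Ioc (0:ℝ) s1, 1 := by
                refine setLIntegral_mono measurable_const fun s _ => ?_
                simpa using ENNReal.ofReal_le_one.2 (min_le_right _ _)
          _ = ENNReal.ofReal s1 := by
              simp [Real.volume_Ioc, hs1nn]
        · calc (∫⁻ s in Ioi s1, ENNReal.ofReal (min (Real.exp (A * s) * x) 1))
              ≤ ∫⁻ s in Ioi s1, ENNReal.ofReal (Real.exp (A * s) * x) := by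
                refine setLIntegral_mono (by fun_prop) fun s _ => ?_
                exact ENNReal.ofReal_le_ofReal (min_le_left _ _)
          _ = ENNReal.ofReal (∫ s in Ioi s1, Real.exp (A * s) * x) := by
              rw [ofReal_integral_eq_lintegral_ofReal]
              · have h0 : Integrable (fun s => Real.exp (-c * s) * x) (volume.restrict (Ioi s1)) :=
                  (exp_neg_integrableOn_Ioi s1 hcpos).mul_const x
                exact h0.congr (by filter_upwards with s; rw [hc]; ring_nf)
              · filter_upwards with s
                positivity
          _ ≤ ENNReal.ofReal (min x 1 / c) := by
              apply ENNReal.ofReal_le_ofReal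
              have : (∫ s in Ioi s1, Real.exp (A * s) * x)
                  = (∫ s in Ioi s1, Real.exp (A * s)) * x := by
                rw [← integral_mul_const]
              rw [this]
              have hint : (∫ s in Ioi s1, Real.exp (A * s)) = c⁻¹ * Real.exp (A * s1) := by
                have := integral_comp_mul_left_Ioi (fun u => Real.exp (-u)) s1 hcpos
                simp only [smul_eq_mul] at this
                have h2 : (∫ s in Ioi s1, Real.exp (A * s)) = ∫ s in Ioi s1, Real.exp (-(c * s)) := by
                  congr 1; ext s; rw [hc]; ring_nf
                rw [h2, this, integral_exp_neg_Ioi]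
                congr 1
                rw [hc]; ring_nf
              rw [hint]
              have hes1 : Real.exp (A * s1) * x = min x 1 := by
                have hA1 : A * s1 = -(max (Real.log x) 0) := by
                  rw [hs1]; field_simp [hc]; ring
                rw [hA1]
                rcases le_or_gt 1 x with h | h
                · rw [max_eq_left (Real.log_nonneg h), Real.exp_neg, Real.exp_log hx,
                    min_eq_right h]
                  field_simp
                · rw [max_eq_right (Real.log_nonpos hx.le h.le), min_eq_left h.le]
                  simp
              rw [mul_assoc, hes1, div_eq_inv_mul]
    _ = ENNReal.ofReal (-A)⁻¹ * ENNReal.ofReal (max (Real.log x) 0 + min x 1) := by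
        rw [← ENNReal.ofReal_add hs1nn (div_nonneg (le_min (le_of_lt hx) zero_le_one) hcpos.le),
          ← ENNReal.ofReal_mul (by positivity)]
        congr 1
        rw [hs1]
        field_simp
        ring
        rw [hc, neg_mul, neg_neg, mul_inv_cancel₀ hA.ne]

open Set Real in
private lemma sigmaFinite_13 (ν : Measure ℝ) (hmin : Integrable (fun x : ℝ => min x 1) ν) :
    SigmaFinite (ν.restrict (Ioi (0:ℝ))) := by
  have hfin : (∫⁻ x, ENNReal.ofReal (min x 1) ∂ν) < ⊤ := by
    refine lt_of_le_of_lt (lintegral_mono fun x => ?_) hmin.hasFiniteIntegral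
    exact Real.ofReal_le_enorm _
  refine ⟨⟨⟨fun n => Iic 0 ∪ Ioi ((n:ℝ)+1)⁻¹, fun _ => trivial, fun n => ?_, ?_⟩⟩⟩
  · have hε : (0:ℝ) < ((n:ℝ)+1)⁻¹ := by positivity
    rw [Measure.restrict_apply (by measurability)]
    have hsub : (Iic (0:ℝ) ∪ Ioi ((n:ℝ)+1)⁻¹) ∩ Ioi 0 ⊆
        {x : ℝ | ENNReal.ofReal (min ((n:ℝ)+1)⁻¹ 1) ≤ ENNReal.ofReal (min x 1)} := by
      rintro y ⟨hy1 | hy1, hy2⟩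
      · exact absurd hy2 (by simpa using hy1)
      · refine ENNReal.ofReal_le_ofReal (le_min (min_le_of_left_le hy1.le) (min_le_right _ _))
    refine lt_of_le_of_lt (measure_mono hsub) ?_
    refine lt_of_le_of_lt (meas_ge_le_lintegral_div (by fun_prop) ?_ (by simp)) ?_
    · simp [ENNReal.ofReal_eq_zero, lt_min hε one_pos, not_le.2 (lt_min hε one_pos), Nat.cast_add_one_pos n]
    · exact ENNReal.div_lt_top hfin.ne (by simp [ENNReal.ofReal_eq_zero, not_le.2 (lt_min hε one_pos), Nat.cast_add_one_pos n])
  · ext y; simp only [mem_iUnion, mem_union, mem_univ, iff_true]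
    rcases le_or_gt y 0 with h | h
    · exact ⟨0, Or.inl h⟩
    · obtain ⟨n, hn⟩ := exists_nat_one_div_lt h
      exact ⟨n, Or.inr (by simpa [one_div] using hn)⟩

open Set Real in
private lemma C_fin_13 (ν : Measure ℝ)
    (hmin : Integrable (fun x : ℝ => min x 1) ν)
    (hlog : IntegrableOn (fun x : ℝ => Real.log x) {x | 1 < x} ν) :
    (∫⁻ x in Ioi (0:ℝ), ENNReal.ofReal (max (Real.log x) 0 + min x 1) ∂ν) < ⊤ := by
  have h1 : ∀ x ∈ Ioi (0:ℝ), ENNReal.ofReal (max (Real.log x) 0 + min x 1)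
      ≤ Set.indicator {y : ℝ | 1 < y} (fun y => ((‖Real.log y‖₊ : NNReal) : ENNReal)) x
        + ((‖min x 1‖₊ : NNReal) : ENNReal) := by
    intro x hx
    refine le_trans (ENNReal.ofReal_add_le) (add_le_add ?_ (Real.ofReal_le_enorm _))
    rcases le_or_gt x 1 with h | h
    · rw [Set.indicator_of_notMem (by simpa using not_lt.2 h)]
      simp [max_eq_right (Real.log_nonpos (le_of_lt hx) h)]
    · rw [Set.indicator_of_mem (by simpa using h)]
      exact le_trans (ENNReal.ofReal_le_ofReal (max_le (le_refl _) (Real.log_nonneg h.le)))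
        (Real.ofReal_le_enorm _)
  have hmeas : Measurable fun x : ℝ => Set.indicator {y : ℝ | 1 < y}
      (fun y => ((‖Real.log y‖₊ : NNReal) : ENNReal)) x + ((‖min x 1‖₊ : NNReal) : ENNReal) := by
    refine Measurable.add ?_ (by fun_prop)
    exact (Real.measurable_log.enorm).indicator (measurableSet_lt measurable_const measurable_id)
  refine lt_of_le_of_lt (setLIntegral_mono hmeas h1) ?_
  rw [lintegral_add_right _ (by fun_prop)]
  refine ENNReal.add_lt_top.2 ⟨?_, ?_⟩
  · refine lt_of_le_of_lt (setLIntegral_le_lintegral _ _) ?_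
    rw [lintegral_indicator (show MeasurableSet {y : ℝ | 1 < y} from measurableSet_Ioi)]
    exact hlog.hasFiniteIntegral
  · refine lt_of_le_of_lt (setLIntegral_le_lintegral _ _) hmin.hasFiniteIntegral

theorem stmt_13 (ν π : Measure ℝ) (hν : ν (Set.Ioi (0 : ℝ))ᶜ = 0)
    (hmin : Integrable (fun x : ℝ => min x 1) ν)
    (hlog : IntegrableOn (fun x : ℝ => Real.log x) {x | 1 < x} ν)
    [IsProbabilityMeasure π] (hπ : π (Set.Iio (0 : ℝ))ᶜ = 0)
    (hinv : IntegrableOn (fun A : ℝ => 1 / (-A)) (Set.Iio 0) π) :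
    (∫⁻ A in Set.Iio (0 : ℝ), ∫⁻ s in Set.Ioi (0 : ℝ), ∫⁻ x in Set.Ioi (0 : ℝ),
        ENNReal.ofReal (min (Real.exp (A * s) * x) 1) ∂ν ∂volume ∂π) < ⊤ := by
  haveI : SigmaFinite (ν.restrict (Set.Ioi (0:ℝ))) := sigmaFinite_13 ν hmin
  set C := ∫⁻ x in Set.Ioi (0:ℝ), ENNReal.ofReal (max (Real.log x) 0 + min x 1) ∂ν with hCdef
  have hC : C < ⊤ := C_fin_13 ν hmin hlog
  have hbound : ∀ A ∈ Set.Iio (0:ℝ),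
      (∫⁻ s in Set.Ioi (0:ℝ), ∫⁻ x in Set.Ioi (0:ℝ),
          ENNReal.ofReal (min (Real.exp (A * s) * x) 1) ∂ν ∂volume)
        ≤ ENNReal.ofReal (-A)⁻¹ * C := by
    intro A hA
    rw [lintegral_lintegral_swap (by fun_prop)]
    calc (∫⁻ x in Set.Ioi (0:ℝ), ∫⁻ s in Set.Ioi (0:ℝ),
            ENNReal.ofReal (min (Real.exp (A * s) * x) 1) ∂volume ∂ν)
        ≤ ∫⁻ x in Set.Ioi (0:ℝ),
            ENNReal.ofReal (-A)⁻¹ * ENNReal.ofReal (max (Real.log x) 0 + min x 1) ∂ν := by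
          have hm : Measurable fun x : ℝ => ENNReal.ofReal (max (Real.log x) 0 + min x 1) :=
            ((Real.measurable_log.max measurable_const).add
              (measurable_id.min measurable_const)).ennreal_ofReal
          exact setLIntegral_mono (hm.const_mul _) fun x hx => inner_bound_13 hA hx
      _ = ENNReal.ofReal (-A)⁻¹ * C := lintegral_const_mul _
          (((Real.measurable_log.max measurable_const).add
            (measurable_id.min measurable_const)).ennreal_ofReal)
  calc (∫⁻ A in Set.Iio (0 : ℝ), ∫⁻ s in Set.Ioi (0 : ℝ), ∫⁻ x in Set.Ioi (0 : ℝ),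
        ENNReal.ofReal (min (Real.exp (A * s) * x) 1) ∂ν ∂volume ∂π)
      ≤ ∫⁻ A in Set.Iio (0:ℝ), ENNReal.ofReal (-A)⁻¹ * C ∂π :=
        setLIntegral_mono (by fun_prop) hbound
    _ = (∫⁻ A in Set.Iio (0:ℝ), ENNReal.ofReal (-A)⁻¹ ∂π) * C :=
        lintegral_mul_const _ (by fun_prop)
    _ < ⊤ := by
        refine ENNReal.mul_lt_top ?_ hC
        refine lt_of_le_of_lt (setLIntegral_mono (by fun_prop) fun A _ => ?_)
          hinv.hasFiniteIntegral
        calc ENNReal.ofReal (-A)⁻¹ = ENNReal.ofReal (1 / (-A)) := by rw [one_div]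
          _ ≤ ((‖1 / (-A)‖₊ : NNReal) : ENNReal) := Real.ofReal_le_enorm _
end

section
/- Let B < 0, t > 0 and α > 1 with α ≠ 2. Then ∫₀^∞ ((e^{Brt} − 1)/(B²r²)) · (r^{α−1} e^{−r}/Γ(α)) dr = ((1 − Bt)^{2−α} − 1)/(B²(α − 1)(α − 2)). (Equivalently, writing A = Br with r distributed according to the Gamma(α,1) distribution, ∫_{(-∞,0)} ∫₀ᵗ (e^{A(t−s)}/A) ds π(dA) = ((1 − Bt)^{2−α} − 1)/(B²(α − 1)(α − 2)) where π is the law of B·R, R ~ Γ(α,1).) -/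
open MeasureTheory Real Set

theorem stmt_14 (B t α : ℝ) (hB : B < 0) (ht : 0 < t) (hα : 1 < α) (hα2 : α ≠ 2) :
    ∫ r in Set.Ioi (0 : ℝ),
        ((Real.exp (B * r * t) - 1) / (B ^ 2 * r ^ 2)) *
          (r ^ (α - 1) * Real.exp (-r) / Real.Gamma α) =
      ((1 - B * t) ^ (2 - α) - 1) / (B ^ 2 * (α - 1) * (α - 2)) := by
  set c : ℝ := -(B * t) with hcdef
  have hc : 0 < c := by simp only [hcdef, neg_pos]; nlinarith
  have hB0 : B ≠ 0 := hB.ne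
  have hα1 : (0:ℝ) < α - 1 := by linarith
  have h2α : (2:ℝ) - α ≠ 0 := fun h => hα2 (by linarith)
  have hΓpos : 0 < Real.Gamma α := Real.Gamma_pos_of_pos (by linarith)
  have hΓ1pos : 0 < Real.Gamma (α - 1) := Real.Gamma_pos_of_pos hα1
  set g : ℝ → ℝ := fun r => (1 - Real.exp (-(c * r))) * (r ^ (α - 3) * Real.exp (-r))
    with hgdef
  -- Step 1: rewrite the LHS
  have step1 : ∫ r in Set.Ioi (0:ℝ),
      ((Real.exp (B * r * t) - 1) / (B ^ 2 * r ^ 2)) *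
        (r ^ (α - 1) * Real.exp (-r) / Real.Gamma α)
      = (-(1 / (B ^ 2 * Real.Gamma α))) * ∫ r in Set.Ioi (0:ℝ), g r := by
    rw [← integral_const_mul]
    refine setIntegral_congr_fun measurableSet_Ioi (fun r hr => ?_)
    have hr0 : (0:ℝ) < r := hr
    have h1 : B * r * t = -(c * r) := by rw [hcdef]; ring
    have h2 : r ^ (α - 1) = r ^ (α - 3) * r ^ 2 := by
      rw [← Real.rpow_natCast r 2, ← Real.rpow_add hr0]
      congr 1; ring
    rw [hgdef]
    simp only [h1, h2]
    field_simp
    ring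
  -- Pointwise lemma A: inner identity in u for fixed r > 0
  have lemA : ∀ r ∈ Ioi (0:ℝ),
      ∫⁻ u in Ioc (0:ℝ) c, ENNReal.ofReal (r ^ (α - 2) * Real.exp (-r + -r * u))
        = ENNReal.ofReal (g r) := by
    intro r hr
    have hr0 : (0:ℝ) < r := hr
    have hint : IntegrableOn (fun u => r ^ (α - 2) * Real.exp (-r + -r * u)) (Ioc 0 c) := by
      apply Continuous.integrableOn_Ioc
      fun_prop
    rw [← ofReal_integral_eq_lintegral_ofReal hint (ae_of_all _ fun u => by positivity)]
    congr 1
    have e0 : ∀ u : ℝ, r ^ (α - 2) * Real.exp (-r + -r * u)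
        = (r ^ (α - 2) * Real.exp (-r)) * Real.exp (-r * u) := by
      intro u; rw [Real.exp_add]; ring
    simp only [e0]
    rw [integral_const_mul, ← intervalIntegral.integral_of_le hc.le,
      intervalIntegral.integral_comp_mul_left (fun x => Real.exp x) (neg_ne_zero.mpr hr0.ne'),
      integral_exp]
    have h3 : r ^ (α - 3) = r ^ (α - 2) * r⁻¹ := by
      rw [← Real.rpow_neg_one r, ← Real.rpow_add hr0]
      congr 1; ring
    rw [hgdef]
    simp only [h3, mul_zero, Real.exp_zero, smul_eq_mul]
    rw [show -r * c = -(c * r) by ring, inv_neg]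
    ring
  -- Pointwise lemma B: Gamma integral in r for fixed u ∈ Ioc 0 c
  have lemB : ∀ u ∈ Ioc (0:ℝ) c,
      ∫⁻ r in Ioi (0:ℝ), ENNReal.ofReal (r ^ (α - 2) * Real.exp (-r + -r * u))
        = ENNReal.ofReal (Real.Gamma (α - 1) * (1 + u) ^ (1 - α)) := by
    intro u hu
    have hu0 : 0 < u := hu.1
    have h1u : (0:ℝ) < 1 + u := by linarith
    have hGc : IntegrableOn (fun x : ℝ => Real.exp (-x) * x ^ (α - 2)) (Ioi 0) := by
      have := Real.GammaIntegral_convergent hα1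
      simpa [show α - 1 - 1 = α - 2 by ring] using this
    have hint : IntegrableOn (fun r => r ^ (α - 2) * Real.exp (-r + -r * u)) (Ioi 0) := by
      refine hGc.mono' ?_ ?_
      · apply Measurable.aestronglyMeasurable
        fun_prop
      · rw [ae_restrict_iff' measurableSet_Ioi]
        filter_upwards with r hr
        have hr0 : (0:ℝ) < r := hr
        rw [Real.norm_eq_abs, abs_of_nonneg (by positivity)]
        rw [mul_comm (Real.exp (-r))]
        gcongr
        all_goals first | positivity | nlinarith
    have hnn : 0 ≤ᵐ[volume.restrict (Ioi (0:ℝ))] fun r => r ^ (α - 2) * Real.exp (-r + -r * u) := by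
      filter_upwards [ae_restrict_mem measurableSet_Ioi] with r hr
      have hr0 : (0:ℝ) < r := hr
      positivity
    rw [← ofReal_integral_eq_lintegral_ofReal hint hnn]
    congr 1
    have h := Real.integral_rpow_mul_exp_neg_mul_Ioi hα1 h1u
    have heq : ∀ r ∈ Ioi (0:ℝ), r ^ (α - 2) * Real.exp (-r + -r * u)
        = r ^ (α - 1 - 1) * Real.exp (-((1 + u) * r)) := by
      intro r hr
      rw [show α - 1 - 1 = α - 2 by ring, show -((1+u)*r) = -r + -r * u by ring]
    rw [setIntegral_congr_fun measurableSet_Ioi heq, h]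
    rw [one_div, Real.inv_rpow h1u.le, ← Real.rpow_neg h1u.le,
      show -(α-1) = 1-α by ring, mul_comm]
  -- Tonelli swap and evaluation
  have hK'nn : 0 ≤ ∫ u in Ioc (0:ℝ) c, Real.Gamma (α - 1) * (1 + u) ^ (1 - α) := by
    refine setIntegral_nonneg measurableSet_Ioc (fun u hu => ?_)
    have h1u : (0:ℝ) < 1 + u := by have := hu.1; linarith
    positivity
  have hKint : IntegrableOn (fun u => Real.Gamma (α - 1) * (1 + u) ^ (1 - α)) (Ioc 0 c) := by
    refine (ContinuousOn.integrableOn_Icc ?_).mono_set Ioc_subset_Icc_self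
    refine ContinuousOn.mul continuousOn_const ?_
    refine ContinuousOn.rpow_const (by fun_prop) (fun x hx => Or.inl ?_)
    have : (0:ℝ) ≤ x := hx.1
    positivity
  have hKnn : 0 ≤ᵐ[volume.restrict (Ioc (0:ℝ) c)]
      fun u => Real.Gamma (α - 1) * (1 + u) ^ (1 - α) := by
    filter_upwards [ae_restrict_mem measurableSet_Ioc] with u hu
    have h1u : (0:ℝ) < 1 + u := by have := hu.1; linarith
    positivity
  have hmeas : Measurable fun p : ℝ × ℝ =>
      ENNReal.ofReal (p.1 ^ (α - 2) * Real.exp (-p.1 + -p.1 * p.2)) := by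
    apply Measurable.ennreal_ofReal
    fun_prop
  have key : ∫ r in Ioi (0:ℝ), g r
      = ∫ u in Ioc (0:ℝ) c, Real.Gamma (α - 1) * (1 + u) ^ (1 - α) := by
    have hgm : AEStronglyMeasurable g (volume.restrict (Ioi (0:ℝ))) := by
      apply Measurable.aestronglyMeasurable
      rw [hgdef]; fun_prop
    have hgnn : 0 ≤ᵐ[volume.restrict (Ioi (0:ℝ))] g := by
      filter_upwards [ae_restrict_mem measurableSet_Ioi] with r hr
      have hr0 : (0:ℝ) < r := hr
      have he : Real.exp (-(c * r)) ≤ 1 := Real.exp_le_one_iff.mpr (by nlinarith)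
      rw [hgdef]
      have : (0:ℝ) ≤ 1 - Real.exp (-(c * r)) := by linarith
      positivity
    rw [integral_eq_lintegral_of_nonneg_ae hgnn hgm]
    have swap : ∫⁻ r in Ioi (0:ℝ), ENNReal.ofReal (g r)
        = ENNReal.ofReal (∫ u in Ioc (0:ℝ) c, Real.Gamma (α - 1) * (1 + u) ^ (1 - α)) := by
      calc ∫⁻ r in Ioi (0:ℝ), ENNReal.ofReal (g r)
          = ∫⁻ r in Ioi (0:ℝ), ∫⁻ u in Ioc (0:ℝ) c,
              ENNReal.ofReal (r ^ (α - 2) * Real.exp (-r + -r * u)) :=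
            (setLIntegral_congr_fun measurableSet_Ioi
              (fun r hr => (lemA r hr).symm))
        _ = ∫⁻ u in Ioc (0:ℝ) c, ∫⁻ r in Ioi (0:ℝ),
              ENNReal.ofReal (r ^ (α - 2) * Real.exp (-r + -r * u)) :=
            lintegral_lintegral_swap hmeas.aemeasurable
        _ = ∫⁻ u in Ioc (0:ℝ) c,
              ENNReal.ofReal (Real.Gamma (α - 1) * (1 + u) ^ (1 - α)) :=
            setLIntegral_congr_fun measurableSet_Ioc lemB
        _ = ENNReal.ofReal (∫ u in Ioc (0:ℝ) c, Real.Gamma (α - 1) * (1 + u) ^ (1 - α)) :=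
            (ofReal_integral_eq_lintegral_ofReal hKint hKnn).symm
    rw [swap, ENNReal.toReal_ofReal hK'nn]
  -- compute the one-dimensional integral
  have hval : ∫ u in Ioc (0:ℝ) c, Real.Gamma (α - 1) * (1 + u) ^ (1 - α)
      = Real.Gamma (α - 1) * (((1 + c) ^ (2 - α) - 1) / (2 - α)) := by
    rw [integral_const_mul]
    congr 1
    rw [← intervalIntegral.integral_of_le hc.le]
    have hcomp := intervalIntegral.integral_comp_add_left (a := (0:ℝ)) (b := c)
      (fun x : ℝ => x ^ (1 - α)) 1
    rw [hcomp]
    rw [integral_rpow (Or.inr ⟨by intro h; apply hα2; linarith [sub_eq_iff_eq_add.mp h],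
      by rw [Set.uIcc_of_le (by linarith : (1:ℝ)+0 ≤ 1+c)]; rintro ⟨h0, -⟩; linarith⟩)]
    rw [show (1:ℝ) - α + 1 = 2 - α by ring, show (1:ℝ) + 0 = 1 by ring, Real.one_rpow]
  -- final algebra
  rw [step1, key, hval]
  have h1c : (1:ℝ) + c = 1 - B * t := by rw [hcdef]; ring
  have hΓ : Real.Gamma α = (α - 1) * Real.Gamma (α - 1) := by
    have h := Real.Gamma_add_one (s := α - 1) hα1.ne'
    rwa [show α - 1 + 1 = α by ring] at h
  rw [h1c, hΓ]
  have hα1' : α - 1 ≠ 0 := hα1.ne'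
  have hα2' : α - 2 ≠ 0 := fun h => hα2 (by linarith)
  field_simp
  ring
end

section
/- Fix t > 0, β, ρ ∈ ℝ, a > 0, b > 0, A < 0 and u ∈ ℝ. Set g = uβ + u²/2 and C = g/A − ρu, and for s ∈ [0,t] set c(s) = u·f_u(A,s) = ((e^{A(t−s)} − 1)/A)·g + ρu. Assume c(s) < b for all s ∈ [0, t] and b + C ≠ 0. Then ∫₀ᵗ ∫₀^∞ (e^{c(s)x} − 1) · a b e^{−bx} dx ds = (a/(A(b + C))) · ( b·ln( (b − ρu) / (b − (e^{At}/A)g + C) ) − A·C·t ). (In particular the inner integral equals a·c(s)/(b − c(s)) for each s.) -/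
open Real MeasureTheory Set

lemma exp_neg_mul_integral {l : ℝ} (hl : 0 < l) :
    ∫ x in Set.Ioi (0 : ℝ), Real.exp (-l * x) = 1 / l := by
  have h := integral_comp_mul_left_Ioi (fun x => Real.exp (-x)) 0 hl
  simp only [mul_zero, integral_exp_neg_Ioi, neg_zero, Real.exp_zero, smul_eq_mul,
    mul_one] at h
  have : (fun x : ℝ => Real.exp (-(l * x))) = fun x : ℝ => Real.exp (-l * x) := by
    funext x; ring_nf
  rw [← one_div] at h
  calc ∫ x in Set.Ioi (0 : ℝ), Real.exp (-l * x)
      = ∫ x in Set.Ioi (0 : ℝ), Real.exp (-(l * x)) := by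
        congr 1; funext x; ring_nf
    _ = 1 / l := h

lemma inner_integral (a b c : ℝ) (hb : 0 < b) (hcb : c < b) :
    ∫ x in Set.Ioi (0 : ℝ), (Real.exp (c * x) - 1) * (a * b * Real.exp (-b * x)) =
      a * c / (b - c) := by
  have hbc : 0 < b - c := sub_pos.mpr hcb
  have hint1 : IntegrableOn (fun x : ℝ => a * b * Real.exp (-(b - c) * x)) (Set.Ioi 0) :=
    (exp_neg_integrableOn_Ioi 0 hbc).const_mul (a * b)
  have hint2 : IntegrableOn (fun x : ℝ => a * b * Real.exp (-b * x)) (Set.Ioi 0) :=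
    (exp_neg_integrableOn_Ioi 0 hb).const_mul (a * b)
  have heq : ∀ x : ℝ, (Real.exp (c * x) - 1) * (a * b * Real.exp (-b * x)) =
      a * b * Real.exp (-(b - c) * x) - a * b * Real.exp (-b * x) := by
    intro x
    have h : Real.exp (c * x) * Real.exp (-b * x) = Real.exp (-(b - c) * x) := by
      rw [← Real.exp_add]; ring_nf
    calc (Real.exp (c * x) - 1) * (a * b * Real.exp (-b * x))
        = a * b * (Real.exp (c * x) * Real.exp (-b * x)) - a * b * Real.exp (-b * x) := by ring
      _ = a * b * Real.exp (-(b - c) * x) - a * b * Real.exp (-b * x) := by rw [h]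
  rw [show (fun x => (Real.exp (c * x) - 1) * (a * b * Real.exp (-b * x))) =
    fun x => a * b * Real.exp (-(b - c) * x) - a * b * Real.exp (-b * x) from funext heq]
  rw [MeasureTheory.integral_sub hint1 hint2, MeasureTheory.integral_const_mul,
    MeasureTheory.integral_const_mul, exp_neg_mul_integral hbc, exp_neg_mul_integral hb]
  field_simp
  ring

theorem stmt_16 (t β ρ a b A u : ℝ) (ht : 0 < t) (ha : 0 < a) (hb : 0 < b) (hA : A < 0)
    (hc : ∀ s ∈ Set.Icc (0 : ℝ) t,
      ((Real.exp (A * (t - s)) - 1) / A) * (u * β + u ^ 2 / 2) + ρ * u < b)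
    (hbC : b + ((u * β + u ^ 2 / 2) / A - ρ * u) ≠ 0) :
    (∫ s in (0 : ℝ)..t, ∫ x in Set.Ioi (0 : ℝ),
        (Real.exp ((((Real.exp (A * (t - s)) - 1) / A) * (u * β + u ^ 2 / 2) + ρ * u) * x) - 1) *
          (a * b * Real.exp (-b * x))) =
      (a / (A * (b + ((u * β + u ^ 2 / 2) / A - ρ * u)))) *
        (b * Real.log ((b - ρ * u) /
            (b - (Real.exp (A * t) / A) * (u * β + u ^ 2 / 2) +
              ((u * β + u ^ 2 / 2) / A - ρ * u))) -
          A * ((u * β + u ^ 2 / 2) / A - ρ * u) * t) ∧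
    ∀ s ∈ Set.Icc (0 : ℝ) t,
      (∫ x in Set.Ioi (0 : ℝ),
          (Real.exp ((((Real.exp (A * (t - s)) - 1) / A) * (u * β + u ^ 2 / 2) + ρ * u) * x) - 1) *
            (a * b * Real.exp (-b * x))) =
        a * (((Real.exp (A * (t - s)) - 1) / A) * (u * β + u ^ 2 / 2) + ρ * u) /
          (b - (((Real.exp (A * (t - s)) - 1) / A) * (u * β + u ^ 2 / 2) + ρ * u)) := by
  have hA0 : A ≠ 0 := ne_of_lt hA
  set g : ℝ := u * β + u ^ 2 / 2 with hg
  set C : ℝ := g / A - ρ * u with hC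
  set K : ℝ := b + C with hK
  set c : ℝ → ℝ := fun s => ((Real.exp (A * (t - s)) - 1) / A) * g + ρ * u with hcdef
  have hKne : K ≠ 0 := hbC
  have hpos : ∀ s ∈ Set.Icc (0 : ℝ) t, 0 < b - c s := fun s hs => sub_pos.mpr (hc s hs)
  -- inner integral formula
  have hinner : ∀ s ∈ Set.Icc (0 : ℝ) t,
      (∫ x in Set.Ioi (0 : ℝ), (Real.exp (c s * x) - 1) * (a * b * Real.exp (-b * x))) =
        a * c s / (b - c s) := fun s hs => inner_integral a b (c s) hb (hc s hs)
  refine ⟨?_, hinner⟩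
  -- continuity of c
  have hcont : Continuous c := by
    apply Continuous.add _ continuous_const
    exact (((Real.continuous_exp.comp (continuous_const.mul
      (continuous_const.sub continuous_id))).sub continuous_const).div_const A).mul
      continuous_const
  have huIcc : Set.uIcc (0 : ℝ) t = Set.Icc 0 t := Set.uIcc_of_le ht.le
  -- rewrite the outer integrand
  have hcongr : (∫ s in (0 : ℝ)..t, ∫ x in Set.Ioi (0 : ℝ),
      (Real.exp (c s * x) - 1) * (a * b * Real.exp (-b * x))) =
      ∫ s in (0 : ℝ)..t, a * c s / (b - c s) := by
    apply intervalIntegral.integral_congr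
    intro s hs
    rw [huIcc] at hs
    exact hinner s hs
  rw [hcongr]
  -- derivative of c
  have hcder : ∀ s : ℝ, HasDerivAt c (-(Real.exp (A * (t - s)) * g)) s := by
    intro s
    have h1 : HasDerivAt (fun s : ℝ => A * (t - s)) (A * (0 - 1)) s :=
      ((hasDerivAt_const s t).sub (hasDerivAt_id s)).const_mul A
    have h2 := (((h1.exp).sub_const 1).div_const A).mul_const g
    have h3 := h2.add_const (ρ * u)
    convert h3 using 1
    · rfl
    · rfl
    rw [mul_div_assoc, mul_div_cancel_left₀ _ hA0]
    ring
  -- antiderivative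
  set F : ℝ → ℝ := fun s => a * b / (A * K) * Real.log (b - c s) - a * C / K * s with hF
  have hFder : ∀ s ∈ Set.uIcc (0 : ℝ) t, HasDerivAt F (a * c s / (b - c s)) s := by
    intro s hs
    rw [huIcc] at hs
    have hne : b - c s ≠ 0 := ne_of_gt (hpos s hs)
    have h1 : HasDerivAt (fun s => b - c s) (-(-(Real.exp (A * (t - s)) * g))) s :=
      (hcder s).const_sub b
    have h2 := (h1.log hne).const_mul (a * b / (A * K))
    have h3 := h2.sub ((hasDerivAt_id s).const_mul (a * C / K))
    convert h3 using 1
    · rfl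
    · rfl
    · rfl
    have key : Real.exp (A * (t - s)) * g = A * K - A * (b - c s) := by
      rw [hcdef, hK, hC]
      field_simp
      ring
    have hCK : C = K - b := by rw [hK]; ring
    have hcs : c s = b - (b - c s) := by ring
    rw [hcs, key, hCK]
    generalize b - c s = D at hne ⊢
    field_simp
    linear_combination (b - K) * mul_inv_cancel₀ hne
  -- interval integrability
  have hii : IntervalIntegrable (fun s => a * c s / (b - c s)) volume 0 t := by
    apply ContinuousOn.intervalIntegrable
    rw [huIcc]
    apply ContinuousOn.div (hcont.continuousOn.const_smul a)
      ((continuous_const.sub hcont).continuousOn)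
    intro s hs
    exact ne_of_gt (hpos s hs)
  rw [intervalIntegral.integral_eq_sub_of_hasDerivAt hFder hii]
  -- evaluate endpoints
  have hct : c t = ρ * u := by
    simp [hcdef]
  have hbct : b - c t = b - ρ * u := by rw [hct]
  have hc0 : b - c 0 = b - Real.exp (A * t) / A * g + C := by
    rw [hcdef, hC]; simp; ring
  have hpt : 0 < b - c t := hpos t ⟨ht.le, le_refl t⟩
  have hp0 : 0 < b - c 0 := hpos 0 ⟨le_refl 0, ht.le⟩
  rw [hF]
  rw [show Real.log ((b - ρ * u) / (b - Real.exp (A * t) / A * g + C)) =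
      Real.log (b - c t) - Real.log (b - c 0) by
    rw [hbct, hc0, Real.log_div (by rw [← hbct]; exact ne_of_gt hpt)
      (by rw [← hc0]; exact ne_of_gt hp0)]]
  field_simp
  ring
end
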